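/- arXiv:2501.03010 — 5 statements merged into one kernel-verified Lean document; each statement's English description precedes it below -/
import Mathlib

section
/- For every θ₀ ∈ (−π, π] and every λ > 1/2, set c := (2√3)⁻¹, a := (−cos θ₀ + √3 sin θ₀)/(2·3^{1/4}) and b := (−cos θ₀ − √3 sin θ₀)/(2·3^{1/4}). Then (2^{3/2}(2λ)^{3/4}/(π·Γ(3/2))) · ∫_{−π/3}^{π/3} ∫_0^∞ e^{r cos(θ−θ₀)} · r · √(π/2)·e^{−√(2λ)·r}·((√(2λ)·r)^{−1/2} + (√(2λ)·r)^{−3/2}) · cos(3θ/2) dr dθ = (4·2^{1/4}·λ^{3/4}/((1−2λ)√π)) · ( √(2 + b/√(cλ))·(b/√(cλ) − 1) + √(2 + a/√(cλ))·(a/√(cλ) − 1) ). -/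
open MeasureTheory Real Set

lemma inner_eval (k : ℝ) (hk : 1 < k) (φ co : ℝ) :
    ∫ r in Set.Ioi (0:ℝ),
      Real.exp (r * Real.cos φ) * r *
        (Real.sqrt (Real.pi/2) * Real.exp (-(k * r)) *
          ((k * r) ^ (-(1:ℝ)/2) + (k * r) ^ (-(3:ℝ)/2))) * co
    = (Real.sqrt (Real.pi/2) * Real.sqrt Real.pi * (Real.sqrt k)⁻¹) *
        (co * ((Real.sqrt (k - Real.cos φ))⁻¹ * (k - Real.cos φ)⁻¹ / 2
          + k⁻¹ * (Real.sqrt (k - Real.cos φ))⁻¹)) := by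
  have hk0 : 0 < k := by linarith
  set μ : ℝ := k - Real.cos φ with hμdef
  have hμ : 0 < μ := by have := Real.cos_le_one φ; simp only [hμdef]; linarith
  set c1 : ℝ := co * Real.sqrt (Real.pi/2) * (Real.sqrt k)⁻¹ with hc1
  set c2 : ℝ := co * Real.sqrt (Real.pi/2) * (Real.sqrt k)⁻¹ * k⁻¹ with hc2
  have hks : k ^ (-((1:ℝ)/2)) = (Real.sqrt k)⁻¹ := by
    rw [Real.rpow_neg hk0.le, Real.sqrt_eq_rpow]
  have heq : Set.EqOn
      (fun r : ℝ => Real.exp (r * Real.cos φ) * r *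
        (Real.sqrt (Real.pi/2) * Real.exp (-(k * r)) *
          ((k * r) ^ (-(1:ℝ)/2) + (k * r) ^ (-(3:ℝ)/2))) * co)
      (fun r : ℝ => c1 * (r ^ ((3:ℝ)/2 - 1) * Real.exp (-(μ * r)))
        + c2 * (r ^ ((1:ℝ)/2 - 1) * Real.exp (-(μ * r)))) (Set.Ioi 0) := by
    intro r hr
    have hr0 : (0:ℝ) < r := hr
    have hexp : Real.exp (r * Real.cos φ) * Real.exp (-(k*r)) = Real.exp (-(μ * r)) := by
      rw [← Real.exp_add]; congr 1; simp only [hμdef]; ring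
    have hpow1 : (k * r) ^ (-(1:ℝ)/2) = (Real.sqrt k)⁻¹ * r ^ (-((1:ℝ)/2)) := by
      rw [show (-(1:ℝ)/2) = -((1:ℝ)/2) by norm_num, Real.mul_rpow hk0.le hr0.le, hks]
    have hpow3 : (k * r) ^ (-(3:ℝ)/2) = (Real.sqrt k)⁻¹ * k⁻¹ * r ^ (-((3:ℝ)/2)) := by
      rw [show (-(3:ℝ)/2) = -((3:ℝ)/2) by norm_num, Real.mul_rpow hk0.le hr0.le]
      congr 1
      rw [show (-((3:ℝ)/2)) = -((1:ℝ)/2) + (-1) by norm_num, Real.rpow_add hk0,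
        Real.rpow_neg_one, hks]
    have hr1 : r * r ^ (-((1:ℝ)/2)) = r ^ ((3:ℝ)/2 - 1) := by
      rw [show r * r ^ (-((1:ℝ)/2)) = r ^ (1:ℝ) * r ^ (-((1:ℝ)/2)) by rw [Real.rpow_one],
        ← Real.rpow_add hr0]
      norm_num
    have hr3 : r * r ^ (-((3:ℝ)/2)) = r ^ ((1:ℝ)/2 - 1) := by
      rw [show r * r ^ (-((3:ℝ)/2)) = r ^ (1:ℝ) * r ^ (-((3:ℝ)/2)) by rw [Real.rpow_one],
        ← Real.rpow_add hr0]
      norm_num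
    simp only
    calc Real.exp (r * Real.cos φ) * r *
        (Real.sqrt (Real.pi/2) * Real.exp (-(k * r)) *
          ((k * r) ^ (-(1:ℝ)/2) + (k * r) ^ (-(3:ℝ)/2))) * co
        = (Real.exp (r * Real.cos φ) * Real.exp (-(k*r))) *
            (co * Real.sqrt (Real.pi/2)) *
            (((k*r) ^ (-(1:ℝ)/2) * r) + ((k*r) ^ (-(3:ℝ)/2) * r)) := by ring
      _ = _ := by
          rw [hexp, hpow1, hpow3]
          rw [show (Real.sqrt k)⁻¹ * r ^ (-((1:ℝ)/2)) * r = (Real.sqrt k)⁻¹ * (r * r ^ (-((1:ℝ)/2))) by ring,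
            show (Real.sqrt k)⁻¹ * k⁻¹ * r ^ (-((3:ℝ)/2)) * r = (Real.sqrt k)⁻¹ * k⁻¹ * (r * r ^ (-((3:ℝ)/2))) by ring,
            hr1, hr3, hc1, hc2]
          ring
  rw [MeasureTheory.setIntegral_congr_fun measurableSet_Ioi heq]
  have hint : ∀ a : ℝ, -1 < a - 1 → IntegrableOn (fun r : ℝ => r ^ (a - 1) * Real.exp (-(μ * r))) (Ioi 0) := by
    intro a ha
    have := integrableOn_rpow_mul_exp_neg_mul_rpow (p := 1) (s := a - 1) (b := μ) ha zero_lt_one hμ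
    refine this.congr_fun (fun x hx => ?_) measurableSet_Ioi
    simp only [Real.rpow_one, neg_mul]
  have h1 := hint (3/2) (by norm_num)
  have h2 := hint (1/2) (by norm_num)
  rw [MeasureTheory.integral_add (h1.const_mul c1) (h2.const_mul c2),
    integral_const_mul, integral_const_mul,
    Real.integral_rpow_mul_exp_neg_mul_Ioi (by norm_num : (0:ℝ) < 3/2) hμ,
    Real.integral_rpow_mul_exp_neg_mul_Ioi (by norm_num : (0:ℝ) < 1/2) hμ]
  have hG1 : Real.Gamma (3/2) = Real.sqrt Real.pi / 2 := by
    rw [show (3:ℝ)/2 = 1/2 + 1 by norm_num, Real.Gamma_add_one (by norm_num),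
      Real.Gamma_one_half_eq]
    ring
  have hG2 : Real.Gamma (1/2) = Real.sqrt Real.pi := Real.Gamma_one_half_eq
  have hp3 : ((1:ℝ)/μ) ^ ((3:ℝ)/2) = (Real.sqrt μ)⁻¹ * μ⁻¹ := by
    rw [one_div, Real.inv_rpow hμ.le, show (3:ℝ)/2 = 1/2 + 1 by norm_num,
      Real.rpow_add hμ, Real.rpow_one, ← Real.sqrt_eq_rpow, mul_inv]
  have hp1 : ((1:ℝ)/μ) ^ ((1:ℝ)/2) = (Real.sqrt μ)⁻¹ := by
    rw [one_div, Real.inv_rpow hμ.le, Real.sqrt_eq_rpow]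
  rw [hG1, hG2, hp3, hp1, hc1, hc2]
  ring

open MeasureTheory Real Set

lemma outer_deriv (k θ₀ : ℝ) (hk : 1 < k) (θ : ℝ) :
    HasDerivAt (fun θ : ℝ => (k*(k-1)*(k+1))⁻¹ * ((Real.sqrt (k - Real.cos (θ - θ₀)))⁻¹ *
      (Real.cos (3*θ₀/2) * Real.sin ((θ-θ₀)/2) *
          ((3*k-2)*(k+1) - 4*Real.sin ((θ-θ₀)/2)^2*((k-1)*(k+1)))
        + Real.sin (3*θ₀/2) * Real.cos ((θ-θ₀)/2) *
          (4*Real.cos ((θ-θ₀)/2)^2*((k-1)*(k+1)) - (3*k+2)*(k-1)))))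
      (Real.cos (3*θ/2) * ((Real.sqrt (k - Real.cos (θ - θ₀)))⁻¹ * (k - Real.cos (θ - θ₀))⁻¹ / 2
        + k⁻¹ * (Real.sqrt (k - Real.cos (θ - θ₀)))⁻¹)) θ := by
  have hk0 : 0 < k := by linarith
  have hμ : 0 < k - Real.cos (θ - θ₀) := by have := Real.cos_le_one (θ - θ₀); linarith
  have hwpos : 0 < Real.sqrt (k - Real.cos (θ - θ₀)) := Real.sqrt_pos.mpr hμ
  have h0 : HasDerivAt (fun θ : ℝ => (θ - θ₀)/2) (1/2) θ :=
    ((hasDerivAt_id θ).sub_const θ₀).div_const 2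
  have hsin := (Real.hasDerivAt_sin ((θ - θ₀)/2)).comp θ h0
  have hcos := (Real.hasDerivAt_cos ((θ - θ₀)/2)).comp θ h0
  have hterm1 := (hsin.const_mul (Real.cos (3*θ₀/2))).mul
    ((((hsin.pow 2).const_mul 4).mul_const ((k-1)*(k+1))).const_sub ((3*k-2)*(k+1)))
  have hterm2 := (hcos.const_mul (Real.sin (3*θ₀/2))).mul
    ((((hcos.pow 2).const_mul 4).mul_const ((k-1)*(k+1))).sub_const ((3*k+2)*(k-1)))
  have hP := hterm1.add hterm2
  have hμd : HasDerivAt (fun θ : ℝ => k - Real.cos (θ - θ₀))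
      (-(-Real.sin (θ - θ₀) * 1)) θ := by
    have h0' : HasDerivAt (fun θ : ℝ => θ - θ₀) 1 θ := (hasDerivAt_id θ).sub_const θ₀
    exact ((Real.hasDerivAt_cos (θ - θ₀)).comp θ h0').const_sub k
  have hw := hμd.sqrt (ne_of_gt hμ)
  have hwi := hw.inv (ne_of_gt hwpos)
  have hGd := (hwi.mul hP).const_mul (k*(k-1)*(k+1))⁻¹
  refine hGd.congr_deriv ?_
  symm
  simp only [Function.comp_apply, Pi.inv_apply, Pi.mul_apply, Pi.add_apply, Pi.pow_apply]
  have hw2 : (Real.sqrt (k - Real.cos (θ - θ₀)))^2 = k - Real.cos (θ - θ₀) := Real.sq_sqrt hμ.le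
  set s := Real.sin ((θ-θ₀)/2) with hs
  set c := Real.cos ((θ-θ₀)/2) with hc
  set CC := Real.cos (3*θ₀/2) with hCC
  set SS := Real.sin (3*θ₀/2) with hSS
  set w := Real.sqrt (k - Real.cos (θ - θ₀)) with hwdef
  have hsc : s^2 + c^2 = 1 := Real.sin_sq_add_cos_sq _
  have hsin2 : Real.sin (θ-θ₀) = 2*s*c := by
    rw [show θ-θ₀ = 2*((θ-θ₀)/2) by ring, Real.sin_two_mul]
  have hcos2 : Real.cos (θ-θ₀) = c^2 - s^2 := by
    rw [show θ-θ₀ = 2*((θ-θ₀)/2) by ring, Real.cos_two_mul']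
  have hcos3 : Real.cos (3*θ/2) = (4*c^3-3*c)*CC - (3*s-4*s^3)*SS := by
    rw [show 3*θ/2 = 3*((θ-θ₀)/2) + 3*θ₀/2 by ring, Real.cos_add,
      Real.cos_three_mul ((θ-θ₀)/2), Real.sin_three_mul ((θ-θ₀)/2)]
  rw [hcos2] at hw2
  rw [hcos3, hsin2, hcos2, show k - (c^2 - s^2) = w^2 from hw2.symm]
  have hwne : w ≠ 0 := ne_of_gt hwpos
  have hk1 : k - 1 ≠ 0 := by intro h; nlinarith
  have hk1' : k + 1 ≠ 0 := by intro h; nlinarith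
  have hkne : k ≠ 0 := ne_of_gt hk0
  field_simp
  linear_combination ((3*k^2*c*CC) + (-4*k^2*c^3*CC) + (3*k^2*s*SS) + (-4*k^2*s^3*SS) + (12*k*c*w^2*CC) + (-12*k*c^3*w^2*CC) + (12*k*s*w^2*SS) + (-12*k*s^3*w^2*SS) + (-9*k*c*s^2*CC) + (-12*k*c*s^2*w^2*CC) + (8*k*c*s^4*CC) + (9*k*c^2*s*SS) + (-12*k*c^2*s*w^2*SS) + (-8*k*c^4*s*SS) + (3*k*c^3*CC) + (-4*k*c^5*CC) + (4*k*c^3*s^2*CC) + (-3*k*s^3*SS) + (-4*k*c^2*s^3*SS) + (4*k*s^5*SS) + (-3*c*CC) + (4*c^3*CC) + (-3*s*SS) + (4*s^3*SS) + (-2*c*s^2*CC) + (1*c*w^2*CC) + (-2*c^2*s*SS) + (-1*s*w^2*SS) + (12*c*w^4*CC) + (15*c^3*w^2*CC) + (-21*c*s^2*w^2*CC) + (-12*c^3*w^4*CC) + (-16*c^5*w^2*CC) + (4*c^3*s^2*w^2*CC) + (12*s*w^4*SS) + (21*c^2*s*w^2*SS) + (-15*s^3*w^2*SS) + (-12*s^3*w^4*SS)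 + (-4*c^2*s^3*w^2*SS) + (16*s^5*w^2*SS) + (-12*c^3*s^2*CC) + (9*c*s^4*CC) + (-12*c*s^2*w^4*CC) + (20*c*s^4*w^2*CC) + (4*c^3*s^4*CC) + (-8*c*s^6*CC) + (9*c^4*s*SS) + (-12*c^2*s^3*SS) + (-12*c^2*s*w^4*SS) + (-20*c^4*s*w^2*SS) + (-8*c^6*s*SS) + (4*c^4*s^3*SS) + (3*c^5*CC) + (-4*c^7*CC) + (8*c^5*s^2*CC) + (3*s^5*SS) + (8*c^2*s^5*SS) + (-4*s^7*SS)) * hw2 + ((4*c^7*CC) + (8*c^6*s*SS) + (20*c^5*w^2*CC) + (1*c^5*CC) + (-16*c^5*s^2*CC) + (-1*c^4*s*SS) + (28*c^4*s*w^2*SS) + (-20*c^4*s^3*SS) + (-3*c^3*CC) + (2*c^3*w^2*CC) + (28*c^3*w^4*CC) + (-48*c^3*s^2*w^2*CC) + (-2*c^3*s^2*CC) + (20*c^3*s^4*CC) + (-7*c^2*s*SS) + (-2*c^2*s*w^2*SS) + (-48*c^2*s^3*w^2*SS) + (2*c^2*s^3*SS) + (32*c^2*s*w^4*SS) + (16*c^2*s^5*SS)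 + (-11*c*w^2*CC) + (7*c*s^2*CC) + (1*c*w^4*CC) + (-2*c*s^2*w^2*CC) + (12*c*w^6*CC) + (-32*c*s^2*w^4*CC) + (28*c*s^4*w^2*CC) + (1*c*s^4*CC) + (-8*c*s^6*CC) + (-11*s*w^2*SS) + (3*s^3*SS) + (-1*s*w^4*SS) + (2*s^3*w^2*SS) + (-28*s^3*w^4*SS) + (20*s^5*w^2*SS) + (-1*s^5*SS) + (12*s*w^6*SS) + (-4*s^7*SS)) * hsc

open Real

lemma endpoint_plus (k θ₀ : ℝ) :
    Real.cos (3*θ₀/2) * Real.sin ((Real.pi/3 - θ₀)/2) *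
        ((3*k-2)*(k+1) - 4*Real.sin ((Real.pi/3 - θ₀)/2)^2*((k-1)*(k+1)))
      + Real.sin (3*θ₀/2) * Real.cos ((Real.pi/3 - θ₀)/2) *
        (4*Real.cos ((Real.pi/3 - θ₀)/2)^2*((k-1)*(k+1)) - (3*k+2)*(k-1))
    = -((k - Real.cos (Real.pi/3 - θ₀)) * (2*(k - Real.cos (Real.pi/3 - θ₀)) - 3*k)) := by
  set x := Real.cos (θ₀/2) with hx
  set y := Real.sin (θ₀/2) with hy
  set r := Real.sqrt 3 with hr
  have hxy : y^2 + x^2 = 1 := Real.sin_sq_add_cos_sq _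
  have hr3 : r^2 = 3 := Real.sq_sqrt (by norm_num)
  have h1 : Real.sin ((Real.pi/3 - θ₀)/2) = x/2 - r/2*y := by
    rw [show (Real.pi/3 - θ₀)/2 = Real.pi/6 - θ₀/2 by ring, Real.sin_sub,
      Real.sin_pi_div_six, Real.cos_pi_div_six]
    ring
  have h2 : Real.cos ((Real.pi/3 - θ₀)/2) = r/2*x + y/2 := by
    rw [show (Real.pi/3 - θ₀)/2 = Real.pi/6 - θ₀/2 by ring, Real.cos_sub,
      Real.sin_pi_div_six, Real.cos_pi_div_six]
    ring
  have h3 : Real.cos (3*θ₀/2) = 4*x^3 - 3*x := by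
    rw [show 3*θ₀/2 = 3*(θ₀/2) by ring, Real.cos_three_mul]
  have h4 : Real.sin (3*θ₀/2) = 3*y - 4*y^3 := by
    rw [show 3*θ₀/2 = 3*(θ₀/2) by ring, Real.sin_three_mul]
  have h5 : Real.cos (Real.pi/3 - θ₀) = (x^2 - y^2)/2 + r/2*(2*y*x) := by
    rw [Real.cos_sub, Real.cos_pi_div_three, Real.sin_pi_div_three,
      show θ₀ = 2*(θ₀/2) by ring, Real.cos_two_mul', Real.sin_two_mul]
    ring
  rw [h1, h2, h3, h4, h5]
  linear_combination (1*k^2 + (-3)*y^2 + (-2)*y^2*k + 11/2*y^2*k^2 + 2*y^4 + (-2)*y^4*k^2 + (-2)*x*y*r*k + 6*x*y^3*r + (-6)*x*y^3*r*k^2 + (-3)*x^2 + 2*x^2*k + 11/2*x^2*k^2 + 16*x^2*y^2 + (-16)*x^2*y^2*k^2 + (-6)*x^3*y*r + 6*x^3*y*r*k^2 + 2*x^4 + (-2)*x^4*k^2) * hxy + (3/2*x*y^3*r + (-3/2)*x*y^3*r*k^2 + (-7)*x^2*y^2 + 9*x^2*y^2*k^2 + 6*x^2*y^4 + (-6)*x^2*y^4*k^2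 + (-3/2)*x^3*y*r + 3/2*x^3*y*r*k^2 + 6*x^4*y^2 + (-6)*x^4*y^2*k^2) * hr3

lemma endpoint_minus (k θ₀ : ℝ) :
    Real.cos (3*θ₀/2) * Real.sin ((-(Real.pi/3) - θ₀)/2) *
        ((3*k-2)*(k+1) - 4*Real.sin ((-(Real.pi/3) - θ₀)/2)^2*((k-1)*(k+1)))
      + Real.sin (3*θ₀/2) * Real.cos ((-(Real.pi/3) - θ₀)/2) *
        (4*Real.cos ((-(Real.pi/3) - θ₀)/2)^2*((k-1)*(k+1)) - (3*k+2)*(k-1))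
    = (k - Real.cos (-(Real.pi/3) - θ₀)) * (2*(k - Real.cos (-(Real.pi/3) - θ₀)) - 3*k) := by
  set x := Real.cos (θ₀/2) with hx
  set y := Real.sin (θ₀/2) with hy
  set r := Real.sqrt 3 with hr
  have hxy : y^2 + x^2 = 1 := Real.sin_sq_add_cos_sq _
  have hr3 : r^2 = 3 := Real.sq_sqrt (by norm_num)
  have h1 : Real.sin ((-(Real.pi/3) - θ₀)/2) = -(x/2 + r/2*y) := by
    rw [show (-(Real.pi/3) - θ₀)/2 = -(Real.pi/6 + θ₀/2) by ring, Real.sin_neg, Real.sin_add,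
      Real.sin_pi_div_six, Real.cos_pi_div_six]
    ring
  have h2 : Real.cos ((-(Real.pi/3) - θ₀)/2) = r/2*x - y/2 := by
    rw [show (-(Real.pi/3) - θ₀)/2 = -(Real.pi/6 + θ₀/2) by ring, Real.cos_neg, Real.cos_add,
      Real.sin_pi_div_six, Real.cos_pi_div_six]
    ring
  have h3 : Real.cos (3*θ₀/2) = 4*x^3 - 3*x := by
    rw [show 3*θ₀/2 = 3*(θ₀/2) by ring, Real.cos_three_mul]
  have h4 : Real.sin (3*θ₀/2) = 3*y - 4*y^3 := by
    rw [show 3*θ₀/2 = 3*(θ₀/2) by ring, Real.sin_three_mul]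
  have h5 : Real.cos (-(Real.pi/3) - θ₀) = (x^2 - y^2)/2 - r/2*(2*y*x) := by
    rw [show -(Real.pi/3) - θ₀ = -(Real.pi/3 + θ₀) by ring, Real.cos_neg, Real.cos_add,
      Real.cos_pi_div_three, Real.sin_pi_div_three,
      show θ₀ = 2*(θ₀/2) by ring, Real.cos_two_mul', Real.sin_two_mul]
    ring
  rw [h1, h2, h3, h4, h5]
  linear_combination ((-1)*k^2 + 3*y^2 + 2*y^2*k + (-11/2)*y^2*k^2 + (-2)*y^4 + 2*y^4*k^2 + (-2)*x*y*r*k + 6*x*y^3*r + (-6)*x*y^3*r*k^2 + 3*x^2 + (-2)*x^2*k + (-11/2)*x^2*k^2 + (-16)*x^2*y^2 + 16*x^2*y^2*k^2 + (-6)*x^3*y*r + 6*x^3*y*r*k^2 + (-2)*x^4 + 2*x^4*k^2) * hxy + (3/2*x*y^3*r + (-3/2)*x*y^3*r*k^2 + 7*x^2*y^2 + (-9)*x^2*y^2*k^2 + (-6)*x^2*y^4 + 6*x^2*y^4*k^2 + (-3/2)*x^3*y*r + 3/2*x^3*y*r*k^2 + (-6)*x^4*y^2 + 6*x^4*y^2*k^2)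 * hr3

set_option maxHeartbeats 2000000 in
/-- Lemma "expression G": explicit evaluation of Le Gall's double-integral formula
for the Laplace transform of the backward cone excursion measure, with the closed
form of the Bessel function `K_{3/2}` substituted in. -/
theorem stmt_0 (θ₀ : ℝ) (hθ₀ : θ₀ ∈ Set.Ioc (-Real.pi) Real.pi)
    (lam : ℝ) (hlam : 1/2 < lam)
    (c a b : ℝ)
    (hc : c = (2 * Real.sqrt 3)⁻¹)
    (ha : a = (-Real.cos θ₀ + Real.sqrt 3 * Real.sin θ₀) / (2 * (3:ℝ) ^ ((1:ℝ)/4)))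
    (hb : b = (-Real.cos θ₀ - Real.sqrt 3 * Real.sin θ₀) / (2 * (3:ℝ) ^ ((1:ℝ)/4))) :
    ((2:ℝ) ^ ((3:ℝ)/2) * (2*lam) ^ ((3:ℝ)/4) / (Real.pi * Real.Gamma (3/2))) *
      (∫ θ in (-(Real.pi/3))..(Real.pi/3), ∫ r in Set.Ioi (0:ℝ),
        Real.exp (r * Real.cos (θ - θ₀)) * r *
          (Real.sqrt (Real.pi/2) * Real.exp (-(Real.sqrt (2*lam) * r)) *
            ((Real.sqrt (2*lam) * r) ^ (-(1:ℝ)/2) + (Real.sqrt (2*lam) * r) ^ (-(3:ℝ)/2))) *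
          Real.cos (3*θ/2))
    = (4 * (2:ℝ) ^ ((1:ℝ)/4) * lam ^ ((3:ℝ)/4) / ((1 - 2*lam) * Real.sqrt Real.pi)) *
        (Real.sqrt (2 + b / Real.sqrt (c*lam)) * (b / Real.sqrt (c*lam) - 1) +
         Real.sqrt (2 + a / Real.sqrt (c*lam)) * (a / Real.sqrt (c*lam) - 1)) := by
  set k : ℝ := Real.sqrt (2*lam) with hkdef
  have hlam0 : (0:ℝ) < lam := by linarith
  have hk2 : k^2 = 2*lam := Real.sq_sqrt (by linarith)
  have hknn : 0 ≤ k := Real.sqrt_nonneg _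
  have hk : 1 < k := by nlinarith
  have hk0 : (0:ℝ) < k := by linarith
  -- step 1: inner integral
  have h1 : (∫ θ in (-(Real.pi/3))..(Real.pi/3), ∫ r in Set.Ioi (0:ℝ),
        Real.exp (r * Real.cos (θ - θ₀)) * r *
          (Real.sqrt (Real.pi/2) * Real.exp (-(k * r)) *
            ((k * r) ^ (-(1:ℝ)/2) + (k * r) ^ (-(3:ℝ)/2))) *
          Real.cos (3*θ/2))
      = ∫ θ in (-(Real.pi/3))..(Real.pi/3),
          (Real.sqrt (Real.pi/2) * Real.sqrt Real.pi * (Real.sqrt k)⁻¹) *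
            (Real.cos (3*θ/2) * ((Real.sqrt (k - Real.cos (θ - θ₀)))⁻¹ * (k - Real.cos (θ - θ₀))⁻¹ / 2
              + k⁻¹ * (Real.sqrt (k - Real.cos (θ - θ₀)))⁻¹)) :=
    intervalIntegral.integral_congr (fun θ _ => inner_eval k hk (θ - θ₀) (Real.cos (3*θ/2)))
  rw [h1, intervalIntegral.integral_const_mul]
  -- step 2: FTC
  have hμpos : ∀ θ : ℝ, 0 < k - Real.cos (θ - θ₀) := fun θ => by
    have := Real.cos_le_one (θ - θ₀); linarith
  have hcontμ : Continuous fun θ : ℝ => k - Real.cos (θ - θ₀) :=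
    continuous_const.sub (Real.continuous_cos.comp (continuous_id.sub continuous_const))
  have hcont : Continuous fun θ : ℝ =>
      Real.cos (3*θ/2) * ((Real.sqrt (k - Real.cos (θ - θ₀)))⁻¹ * (k - Real.cos (θ - θ₀))⁻¹ / 2
        + k⁻¹ * (Real.sqrt (k - Real.cos (θ - θ₀)))⁻¹) := by
    have hsq : Continuous fun θ : ℝ => (Real.sqrt (k - Real.cos (θ - θ₀)))⁻¹ :=
      (Real.continuous_sqrt.comp hcontμ).inv₀
        (fun θ => ne_of_gt (Real.sqrt_pos.mpr (hμpos θ)))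
    have hinv : Continuous fun θ : ℝ => (k - Real.cos (θ - θ₀))⁻¹ :=
      hcontμ.inv₀ (fun θ => ne_of_gt (hμpos θ))
    have hcos32 : Continuous fun θ : ℝ => Real.cos (3*θ/2) := by fun_prop
    exact hcos32.mul (((hsq.mul hinv).div_const 2).add (continuous_const.mul hsq))
  have hftc := intervalIntegral.integral_eq_sub_of_hasDerivAt (a := -(Real.pi/3)) (b := Real.pi/3)
    (f := fun θ : ℝ => (k*(k-1)*(k+1))⁻¹ * ((Real.sqrt (k - Real.cos (θ - θ₀)))⁻¹ *
      (Real.cos (3*θ₀/2) * Real.sin ((θ-θ₀)/2) *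
          ((3*k-2)*(k+1) - 4*Real.sin ((θ-θ₀)/2)^2*((k-1)*(k+1)))
        + Real.sin (3*θ₀/2) * Real.cos ((θ-θ₀)/2) *
          (4*Real.cos ((θ-θ₀)/2)^2*((k-1)*(k+1)) - (3*k+2)*(k-1)))))
    (fun θ _ => outer_deriv k θ₀ hk θ) (hcont.intervalIntegrable _ _)
  rw [hftc]
  beta_reduce
  rw [endpoint_plus k θ₀, endpoint_minus k θ₀]
  -- abbreviations for endpoint square roots
  have hμp : 0 < k - Real.cos (Real.pi/3 - θ₀) := hμpos _
  have hμm : 0 < k - Real.cos (-(Real.pi/3) - θ₀) := hμpos _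
  set wp : ℝ := Real.sqrt (k - Real.cos (Real.pi/3 - θ₀)) with hwp
  set wm : ℝ := Real.sqrt (k - Real.cos (-(Real.pi/3) - θ₀)) with hwm
  have hwp2 : wp^2 = k - Real.cos (Real.pi/3 - θ₀) := Real.sq_sqrt hμp.le
  have hwm2 : wm^2 = k - Real.cos (-(Real.pi/3) - θ₀) := Real.sq_sqrt hμm.le
  have hwp0 : wp ≠ 0 := ne_of_gt (Real.sqrt_pos.mpr hμp)
  have hwm0 : wm ≠ 0 := ne_of_gt (Real.sqrt_pos.mpr hμm)
  rw [← hwp2, ← hwm2]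
  -- scalar facts
  have hs2 : Real.sqrt 2 ^ 2 = 2 := Real.sq_sqrt (by norm_num)
  have hs2' : (0:ℝ) < Real.sqrt 2 := Real.sqrt_pos.mpr (by norm_num)
  have hsπ : Real.sqrt Real.pi ^ 2 = Real.pi := Real.sq_sqrt Real.pi_pos.le
  have hsπ' : (0:ℝ) < Real.sqrt Real.pi := Real.sqrt_pos.mpr Real.pi_pos
  have hsk : Real.sqrt k ^ 2 = k := Real.sq_sqrt hk0.le
  have hsk' : (0:ℝ) < Real.sqrt k := Real.sqrt_pos.mpr hk0
  have hsl' : (0:ℝ) < Real.sqrt lam := Real.sqrt_pos.mpr hlam0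
  have h34 : (0:ℝ) < (3:ℝ) ^ ((1:ℝ)/4) := Real.rpow_pos_of_pos (by norm_num) _
  have h34sq : ((3:ℝ) ^ ((1:ℝ)/4))^2 = Real.sqrt 3 := by
    rw [← Real.rpow_natCast ((3:ℝ) ^ ((1:ℝ)/4)) 2, ← Real.rpow_mul (by norm_num : (0:ℝ) ≤ 3),
      Real.sqrt_eq_rpow]
    norm_num
  have hs3' : (0:ℝ) < Real.sqrt 3 := Real.sqrt_pos.mpr (by norm_num)
  have hGamma : Real.Gamma (3/2) = Real.sqrt Real.pi / 2 := by
    rw [show (3:ℝ)/2 = 1/2 + 1 by norm_num, Real.Gamma_add_one (by norm_num),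
      Real.Gamma_one_half_eq]
    ring
  have hsqpi2 : Real.sqrt (Real.pi/2) = Real.sqrt Real.pi / Real.sqrt 2 :=
    Real.sqrt_div Real.pi_pos.le 2
  have h232 : (2:ℝ) ^ ((3:ℝ)/2) = 2 * Real.sqrt 2 := by
    rw [show (3:ℝ)/2 = 1 + 1/2 by norm_num, Real.rpow_add (by norm_num : (0:ℝ) < 2),
      Real.rpow_one, Real.sqrt_eq_rpow]
  have h2l34 : (2*lam) ^ ((3:ℝ)/4) = k * Real.sqrt k := by
    rw [show (3:ℝ)/4 = (1/2) * (3/2) by norm_num,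
      Real.rpow_mul (by linarith : (0:ℝ) ≤ 2*lam), ← Real.sqrt_eq_rpow, ← hkdef,
      show (3:ℝ)/2 = 1 + 1/2 by norm_num, Real.rpow_add hk0, Real.rpow_one, Real.sqrt_eq_rpow]
  have hql : (2:ℝ) ^ ((1:ℝ)/4) * lam ^ ((3:ℝ)/4) = k * Real.sqrt k / Real.sqrt 2 := by
    have hmul : (2*lam) ^ ((3:ℝ)/4) = 2 ^ ((3:ℝ)/4) * lam ^ ((3:ℝ)/4) :=
      Real.mul_rpow (by norm_num) hlam0.le
    have h234 : (2:ℝ) ^ ((3:ℝ)/4) = 2 ^ ((1:ℝ)/4) * Real.sqrt 2 := by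
      rw [show (3:ℝ)/4 = 1/4 + 1/2 by norm_num, Real.rpow_add (by norm_num : (0:ℝ) < 2),
        Real.sqrt_eq_rpow]
    rw [hmul, h234] at h2l34
    field_simp at h2l34 ⊢
    linarith [h2l34]
  -- RHS: rewrite a,b in terms of k and endpoint quantities
  have hsqcl : Real.sqrt (c*lam) = Real.sqrt lam / (Real.sqrt 2 * (3:ℝ)^((1:ℝ)/4)) := by
    rw [hc, show ((2 * Real.sqrt 3)⁻¹ * lam) = lam / (2 * Real.sqrt 3) by ring,
      Real.sqrt_div hlam0.le, Real.sqrt_mul (by norm_num : (0:ℝ) ≤ 2), ← h34sq,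
      Real.sqrt_sq h34.le]
  have hk' : k = Real.sqrt 2 * Real.sqrt lam := by
    rw [hkdef, Real.sqrt_mul (by norm_num : (0:ℝ) ≤ 2)]
  have hcosp : Real.cos (Real.pi/3 - θ₀) = (Real.cos θ₀ + Real.sqrt 3 * Real.sin θ₀)/2 := by
    rw [Real.cos_sub, Real.cos_pi_div_three, Real.sin_pi_div_three]; ring
  have hcosm : Real.cos (-(Real.pi/3) - θ₀) = (Real.cos θ₀ - Real.sqrt 3 * Real.sin θ₀)/2 := by
    rw [show -(Real.pi/3) - θ₀ = -(Real.pi/3 + θ₀) by ring, Real.cos_neg, Real.cos_add,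
      Real.cos_pi_div_three, Real.sin_pi_div_three]; ring
  have hbk : b / Real.sqrt (c*lam) = (-Real.cos θ₀ - Real.sqrt 3 * Real.sin θ₀)/k := by
    rw [hb, hsqcl, hk']
    field_simp
    ring_nf
    linear_combination (-(Real.cos θ₀ + Real.sqrt 3 * Real.sin θ₀)) * hs2
  have hak : a / Real.sqrt (c*lam) = (-Real.cos θ₀ + Real.sqrt 3 * Real.sin θ₀)/k := by
    rw [ha, hsqcl, hk']
    field_simp
    ring_nf
    linear_combination (-(Real.cos θ₀ - Real.sqrt 3 * Real.sin θ₀)) * hs2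
  have hb1 : b / Real.sqrt (c*lam) - 1 = (2*wp^2 - 3*k)/k := by
    rw [hbk, hwp2, hcosp]; field_simp; ring
  have ha1 : a / Real.sqrt (c*lam) - 1 = (2*wm^2 - 3*k)/k := by
    rw [hak, hwm2, hcosm]; field_simp; ring
  have hb2 : Real.sqrt (2 + b / Real.sqrt (c*lam)) = Real.sqrt 2 * wp / Real.sqrt k := by
    rw [hbk]
    rw [show 2 + (-Real.cos θ₀ - Real.sqrt 3 * Real.sin θ₀)/k = 2*wp^2/k by
      rw [hwp2, hcosp]; field_simp; ring]
    rw [Real.sqrt_div (by positivity) k, Real.sqrt_mul (by norm_num : (0:ℝ) ≤ 2),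
      Real.sqrt_sq (Real.sqrt_nonneg _)]
  have ha2 : Real.sqrt (2 + a / Real.sqrt (c*lam)) = Real.sqrt 2 * wm / Real.sqrt k := by
    rw [hak]
    rw [show 2 + (-Real.cos θ₀ + Real.sqrt 3 * Real.sin θ₀)/k = 2*wm^2/k by
      rw [hwm2, hcosm]; field_simp; ring]
    rw [Real.sqrt_div (by positivity) k, Real.sqrt_mul (by norm_num : (0:ℝ) ≤ 2),
      Real.sqrt_sq (Real.sqrt_nonneg _)]
  rw [hb1, ha1, hb2, ha2, hGamma, hsqpi2, h232, h2l34,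
    show (4:ℝ) * 2^((1:ℝ)/4) * lam^((3:ℝ)/4) = 4*(2^((1:ℝ)/4)*lam^((3:ℝ)/4)) by ring, hql,
    show (1:ℝ) - 2*lam = 1 - k^2 by rw [hk2]]
  have hne1 : k - 1 ≠ 0 := sub_ne_zero.mpr (ne_of_gt hk)
  have hne1' : k + 1 ≠ 0 := by positivity
  have hne2 : (1:ℝ) - k^2 ≠ 0 :=
    sub_ne_zero.mpr (ne_of_lt (one_lt_pow₀ hk (by norm_num)))
  have hπ0 : Real.pi ≠ 0 := Real.pi_ne_zero
  field_simp
  ring_nf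
  linear_combination (wp*k*12 - wp*k^3*12 - wp^3*8 + wp^3*k^2*8 + k*wm*12 + k^2*wm^3*8 - k^3*wm*12 - wm^3*8) * hsπ
end

section
/- For every r₁ > 0, the pushforward of the measure μ under the map (l, r, t) ↦ (r₁·l, r₁·r, r₁²·t) equals √r₁ · μ. -/
open MeasureTheory

/-- The measure `μ` on `(0,∞)³` with density
`(l,r,t) ↦ (3^{−5/8}/(8√(2π))) (l+r)^{1/2} exp(−(l+r)²/(2√3 t)) t^{−5/2}`
with respect to Lebesgue measure. -/
noncomputable def μ : Measure (ℝ × ℝ × ℝ) :=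
  (volume.restrict {p : ℝ × ℝ × ℝ | 0 < p.1 ∧ 0 < p.2.1 ∧ 0 < p.2.2}).withDensity
    fun p => ENNReal.ofReal
      ((3:ℝ) ^ (-(5:ℝ)/8) / (8 * Real.sqrt (2 * Real.pi)) * (p.1 + p.2.1) ^ ((1:ℝ)/2) *
        Real.exp (-(p.1 + p.2.1)^2 / (2 * Real.sqrt 3 * p.2.2)) * p.2.2 ^ (-(5:ℝ)/2))

section aux

open ENNReal

lemma my_sigmaFinite_smul {α : Type*} [MeasurableSpace α] (c : ℝ≥0∞) (hc : c ≠ ⊤)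
    (ν : Measure α) [SigmaFinite ν] : SigmaFinite (c • ν) := by
  lift c to NNReal using hc
  have : (c : ℝ≥0∞) • ν = c • ν := (ENNReal.smul_def c ν).symm
  rw [this]; infer_instance

lemma my_prod_smul_left {α β : Type*} [MeasurableSpace α] [MeasurableSpace β]
    (c : ℝ≥0∞) (hc : c ≠ ⊤) (ν : Measure α) (ρ : Measure β) [SigmaFinite ν] [SigmaFinite ρ] :
    (c • ν).prod ρ = c • ν.prod ρ := by
  lift c to NNReal using hc
  haveI : SigmaFinite ((c : ℝ≥0∞) • ν) := by
    have : (c : ℝ≥0∞) • ν = c • ν := (ENNReal.smul_def c ν).symm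
    rw [this]; infer_instance
  refine Measure.prod_eq fun s t hs ht => ?_
  simp [Measure.prod_prod, Measure.smul_apply, mul_assoc, smul_eq_mul]
  rw [ENNReal.smul_def, smul_eq_mul]

lemma my_prod_smul_right {α β : Type*} [MeasurableSpace α] [MeasurableSpace β]
    (c : ℝ≥0∞) (hc : c ≠ ⊤) (ν : Measure α) (ρ : Measure β) [SigmaFinite ν] [SigmaFinite ρ] :
    ν.prod (c • ρ) = c • ν.prod ρ := by
  lift c to NNReal using hc
  haveI : SigmaFinite ((c : ℝ≥0∞) • ρ) := by
    have : (c : ℝ≥0∞) • ρ = c • ρ := (ENNReal.smul_def c ρ).symm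
    rw [this]; infer_instance
  refine Measure.prod_eq fun s t hs ht => ?_
  simp [Measure.prod_prod, Measure.smul_apply, smul_eq_mul]
  rw [ENNReal.smul_def, smul_eq_mul]
  ring

/-- Scaling of Lebesgue measure on `ℝ × ℝ × ℝ`. -/
lemma map_scaling_volume (r₁ : ℝ) (hr : 0 < r₁) :
    Measure.map (fun p : ℝ × ℝ × ℝ => (r₁ * p.1, r₁ * p.2.1, r₁^2 * p.2.2)) volume
      = ENNReal.ofReal ((r₁^4)⁻¹) • volume := by
  have hr' : r₁ ≠ 0 := hr.ne'
  have hr2 : (r₁^2 : ℝ) ≠ 0 := pow_ne_zero 2 hr'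
  have h1 : Measure.map (fun x : ℝ => r₁ * x) volume = ENNReal.ofReal |r₁⁻¹| • volume :=
    Real.map_volume_mul_left hr'
  have h2 : Measure.map (fun x : ℝ => r₁^2 * x) volume = ENNReal.ofReal |(r₁^2)⁻¹| • volume :=
    Real.map_volume_mul_left hr2
  have hm1 : Measurable (fun x : ℝ => r₁ * x) := measurable_const_mul r₁
  have hm2 : Measurable (fun x : ℝ => r₁^2 * x) := measurable_const_mul (r₁^2)
  have hpair : Measure.map (Prod.map (fun x : ℝ => r₁ * x) (fun x : ℝ => r₁^2 * x))
      (volume : Measure (ℝ × ℝ))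
      = (ENNReal.ofReal |r₁⁻¹| * ENNReal.ofReal |(r₁^2)⁻¹|) • volume := by
    haveI := my_sigmaFinite_smul (ENNReal.ofReal |(r₁^2)⁻¹|) ENNReal.ofReal_ne_top (volume : Measure ℝ)
    rw [Measure.volume_eq_prod _ _, ← Measure.map_prod_map _ _ hm1 hm2, h1, h2,
      my_prod_smul_left _ ENNReal.ofReal_ne_top, my_prod_smul_right _ ENNReal.ofReal_ne_top,
      smul_smul, ← Measure.volume_eq_prod _ _]
  have hmp : Measurable (Prod.map (fun x : ℝ => r₁ * x) (fun x : ℝ => r₁^2 * x)) :=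
    hm1.prodMap hm2
  have htriple : Measure.map (Prod.map (fun x : ℝ => r₁ * x)
      (Prod.map (fun x : ℝ => r₁ * x) (fun x : ℝ => r₁^2 * x)))
      (volume : Measure (ℝ × ℝ × ℝ))
      = (ENNReal.ofReal |r₁⁻¹| * (ENNReal.ofReal |r₁⁻¹| * ENNReal.ofReal |(r₁^2)⁻¹|)) • volume := by
    haveI := my_sigmaFinite_smul (ENNReal.ofReal |r₁⁻¹| * ENNReal.ofReal |(r₁^2)⁻¹|)
      (ENNReal.mul_ne_top ENNReal.ofReal_ne_top ENNReal.ofReal_ne_top) (volume : Measure (ℝ × ℝ))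
    rw [Measure.volume_eq_prod _ _, ← Measure.map_prod_map _ _ hm1 hmp, h1, hpair,
      my_prod_smul_left _ ENNReal.ofReal_ne_top, my_prod_smul_right _ (by
        exact ENNReal.mul_ne_top ENNReal.ofReal_ne_top ENNReal.ofReal_ne_top),
      smul_smul, ← Measure.volume_eq_prod _ _]
  have hfun : (fun p : ℝ × ℝ × ℝ => (r₁ * p.1, r₁ * p.2.1, r₁^2 * p.2.2))
      = Prod.map (fun x : ℝ => r₁ * x)
        (Prod.map (fun x : ℝ => r₁ * x) (fun x : ℝ => r₁^2 * x)) := rfl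
  rw [hfun, htriple]
  congr 1
  rw [abs_of_pos (by positivity), abs_of_pos (by positivity),
    ← ENNReal.ofReal_mul (by positivity), ← ENNReal.ofReal_mul (by positivity)]
  congr 1
  field_simp

/-- Pointwise scaling of the density. -/
lemma density_scale {r₁ : ℝ} (hr : 0 < r₁) (c : ℝ) {a b t : ℝ} (ha : 0 < a) (hb : 0 < b)
    (ht : 0 < t) :
    c * (a / r₁ + b / r₁) ^ ((1:ℝ)/2) *
      Real.exp (-(a / r₁ + b / r₁)^2 / (2 * Real.sqrt 3 * (t / r₁^2))) *
      (t / r₁^2) ^ (-(5:ℝ)/2)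
    = r₁ ^ ((9:ℝ)/2) *
      (c * (a + b) ^ ((1:ℝ)/2) * Real.exp (-(a + b)^2 / (2 * Real.sqrt 3 * t)) *
        t ^ (-(5:ℝ)/2)) := by
  have hr' : r₁ ≠ 0 := hr.ne'
  have ht' : t ≠ 0 := ht.ne'
  have hs3 : Real.sqrt 3 ≠ 0 := by positivity
  have hab : (0:ℝ) ≤ a + b := by linarith
  have h1 : a / r₁ + b / r₁ = (a + b) / r₁ := by ring
  rw [h1]
  have hexp : -((a + b) / r₁)^2 / (2 * Real.sqrt 3 * (t / r₁^2))
      = -(a + b)^2 / (2 * Real.sqrt 3 * t) := by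
    field_simp
  rw [hexp]
  have hpow1 : ((a + b) / r₁) ^ ((1:ℝ)/2) = (a + b) ^ ((1:ℝ)/2) / r₁ ^ ((1:ℝ)/2) :=
    Real.div_rpow hab hr.le _
  have hpow2 : (t / r₁^2) ^ (-(5:ℝ)/2) = t ^ (-(5:ℝ)/2) / (r₁^2) ^ (-(5:ℝ)/2) :=
    Real.div_rpow ht.le (by positivity) _
  rw [hpow1, hpow2]
  have hr2 : (r₁^2 : ℝ) ^ (-(5:ℝ)/2) = r₁ ^ (-(5:ℝ)) := by
    rw [← Real.rpow_natCast r₁ 2, ← Real.rpow_mul hr.le]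
    norm_num
  rw [hr2]
  have hkey : r₁ ^ ((1:ℝ)/2) * r₁ ^ (-(5:ℝ)) = (r₁ ^ ((9:ℝ)/2))⁻¹ := by
    rw [← Real.rpow_add hr, ← Real.rpow_neg hr.le]
    norm_num
  have hne : r₁ ^ ((1:ℝ)/2) ≠ 0 := by positivity
  have hne2 : r₁ ^ (-(5:ℝ)) ≠ 0 := by positivity
  have hkey2 : r₁ ^ ((9:ℝ)/2) * (r₁ ^ ((1:ℝ)/2) * r₁ ^ (-(5:ℝ))) = 1 := by
    rw [← Real.rpow_add hr, ← Real.rpow_add hr]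
    norm_num
  field_simp
  linear_combination (-c) * hkey2

end aux

/-- Scaling relation for `μ`: the pushforward under `(l,r,t) ↦ (r₁ l, r₁ r, r₁² t)`
equals `√r₁ · μ`. -/
theorem stmt_4 (r₁ : ℝ) (hr₁ : 0 < r₁) :
    Measure.map (fun p : ℝ × ℝ × ℝ => (r₁ * p.1, r₁ * p.2.1, r₁^2 * p.2.2)) μ
    = ENNReal.ofReal (Real.sqrt r₁) • μ := by
  have hr' : r₁ ≠ 0 := hr₁.ne'
  set T : ℝ × ℝ × ℝ → ℝ × ℝ × ℝ := fun p => (r₁ * p.1, r₁ * p.2.1, r₁^2 * p.2.2) with hT_def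
  set T' : ℝ × ℝ × ℝ → ℝ × ℝ × ℝ := fun p => (p.1 / r₁, p.2.1 / r₁, p.2.2 / r₁^2) with hT'_def
  have hTmeas : Measurable T := by
    apply Measurable.prodMk (measurable_fst.const_mul r₁)
    exact Measurable.prodMk ((measurable_fst.comp measurable_snd).const_mul r₁)
      ((measurable_snd.comp measurable_snd).const_mul (r₁^2))
  have hT'meas : Measurable T' := by
    apply Measurable.prodMk (measurable_fst.div_const r₁)
    exact Measurable.prodMk ((measurable_fst.comp measurable_snd).div_const r₁)
      ((measurable_snd.comp measurable_snd).div_const (r₁^2))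
  have hr2 : (r₁^2 : ℝ) ≠ 0 := pow_ne_zero 2 hr'
  have hTT' : ∀ x, T' (T x) = x := by
    intro x
    simp only [hT_def, hT'_def]
    rw [Prod.ext_iff, Prod.ext_iff]
    refine ⟨by field_simp, by field_simp, by field_simp⟩
  have hT'T : ∀ x, T (T' x) = x := by
    intro x
    simp only [hT_def, hT'_def]
    rw [Prod.ext_iff, Prod.ext_iff]
    refine ⟨by field_simp, by field_simp, by field_simp⟩
  let e : (ℝ × ℝ × ℝ) ≃ᵐ (ℝ × ℝ × ℝ) :=
    { toFun := T
      invFun := T'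
      left_inv := hTT'
      right_inv := hT'T
      measurable_toFun := hTmeas
      measurable_invFun := hT'meas }
  have hmape : Measure.map (⇑e) volume = ENNReal.ofReal ((r₁^4)⁻¹) • volume :=
    map_scaling_volume r₁ hr₁
  set S : Set (ℝ × ℝ × ℝ) := {p : ℝ × ℝ × ℝ | 0 < p.1 ∧ 0 < p.2.1 ∧ 0 < p.2.2} with hS_def
  have hSmeas : MeasurableSet S := by
    apply MeasurableSet.inter (measurableSet_lt measurable_const measurable_fst)
    exact MeasurableSet.inter
      (measurableSet_lt measurable_const (measurable_fst.comp measurable_snd))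
      (measurableSet_lt measurable_const (measurable_snd.comp measurable_snd))
  have hSpre : T ⁻¹' S = S := by
    ext p
    simp only [hT_def, hS_def, Set.mem_preimage, Set.mem_setOf_eq]
    have hiff : ∀ (c x : ℝ), 0 < c → (0 < c * x ↔ 0 < x) := by
      intro c x hc
      constructor
      · intro h
        nlinarith
      · exact fun h => mul_pos hc h
    rw [hiff r₁ p.1 hr₁, hiff r₁ p.2.1 hr₁, hiff (r₁^2) p.2.2 (by positivity)]
  set C : ℝ := (3:ℝ) ^ (-(5:ℝ)/8) / (8 * Real.sqrt (2 * Real.pi)) with hC_def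
  set f : ℝ × ℝ × ℝ → ENNReal := fun p => ENNReal.ofReal
      (C * (p.1 + p.2.1) ^ ((1:ℝ)/2) *
        Real.exp (-(p.1 + p.2.1)^2 / (2 * Real.sqrt 3 * p.2.2)) * p.2.2 ^ (-(5:ℝ)/2))
    with hf_def
  have hμ : μ = (volume.restrict S).withDensity f := rfl
  ext s hs
  rw [Measure.map_apply hTmeas hs, Measure.smul_apply, smul_eq_mul, hμ,
    withDensity_apply _ (hTmeas hs), withDensity_apply _ hs,
    Measure.restrict_restrict (hTmeas hs), Measure.restrict_restrict hs]
  have hA : MeasurableSet (s ∩ S) := hs.inter hSmeas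
  have hpre2 : T ⁻¹' s ∩ S = T ⁻¹' (s ∩ S) := by rw [Set.preimage_inter, hSpre]
  rw [hpre2, ← lintegral_indicator (hTmeas hA) f]
  have hind : ∀ x, Set.indicator (T ⁻¹' (s ∩ S)) f x
      = Set.indicator (s ∩ S) (fun y => f (T' y)) (T x) := by
    intro x
    by_cases hx : T x ∈ s ∩ S
    · rw [Set.indicator_of_mem hx, Set.indicator_of_mem (Set.mem_preimage.2 hx), hTT']
    · rw [Set.indicator_of_notMem hx]
      exact Set.indicator_of_notMem (show x ∉ T ⁻¹' (s ∩ S) from fun h => hx h) f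
  calc ∫⁻ x, Set.indicator (T ⁻¹' (s ∩ S)) f x
      = ∫⁻ x, Set.indicator (s ∩ S) (fun y => f (T' y)) (T x) := lintegral_congr hind
    _ = ∫⁻ y, Set.indicator (s ∩ S) (fun y => f (T' y)) y ∂(Measure.map (⇑e) volume) :=
        (lintegral_map_equiv _ e).symm
    _ = ENNReal.ofReal ((r₁^4)⁻¹) * ∫⁻ y in s ∩ S, f (T' y) := by
        rw [hmape, lintegral_smul_measure, lintegral_indicator hA, smul_eq_mul]
    _ = ENNReal.ofReal ((r₁^4)⁻¹) *
          ∫⁻ y in s ∩ S, ENNReal.ofReal (r₁ ^ ((9:ℝ)/2)) * f y := by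
        congr 1
        refine setLIntegral_congr_fun hA (fun y hy => ?_)
        obtain ⟨-, hy1, hy2, hy3⟩ := hy
        show ENNReal.ofReal _ = _
        rw [hf_def]
        simp only [hT'_def]
        rw [density_scale hr₁ C hy1 hy2 hy3,
          ENNReal.ofReal_mul (le_of_lt (Real.rpow_pos_of_pos hr₁ _))]
    _ = ENNReal.ofReal (Real.sqrt r₁) * ∫⁻ y in s ∩ S, f y := by
        rw [lintegral_const_mul' _ _ ENNReal.ofReal_ne_top, ← mul_assoc]
        congr 1
        rw [← ENNReal.ofReal_mul (by positivity)]
        congr 1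
        rw [Real.sqrt_eq_rpow]
        have h4 : (r₁^4 : ℝ) = r₁ ^ ((4:ℝ)) := by
          rw [← Real.rpow_natCast r₁ 4]
          norm_num
        rw [h4, ← Real.rpow_neg hr₁.le, ← Real.rpow_add hr₁]
        norm_num
end

section
/- The pushforward of the measure μ under the projection (l, r, t) ↦ (l, r) is the measure on (0,∞)² with density (l, r) ↦ (3^{1/8}/8) · (l + r)^{−5/2} with respect to Lebesgue measure. -/
open MeasureTheory
open scoped ENNReal

section Aux
open Set Real
open scoped ENNReal

lemma aux_map_equiv_withDensity {α β : Type*} [MeasurableSpace α] [MeasurableSpace β]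
    (e : α ≃ᵐ β) {μ : Measure α} {ν : Measure β} (he : MeasurePreserving e μ ν)
    (g : β → ℝ≥0∞) (hg : Measurable g) :
    Measure.map e (μ.withDensity (g ∘ e)) = ν.withDensity g := by
  ext B hB
  rw [Measure.map_apply e.measurable hB, withDensity_apply _ (hB.preimage e.measurable),
    withDensity_apply _ hB, ← he.map_eq, setLIntegral_map hB hg e.measurable]
  rfl

lemma aux_map_fst_withDensity {α β : Type*} [MeasurableSpace α] [MeasurableSpace β]
    (μ : Measure α) (ν : Measure β) [SigmaFinite μ] [SigmaFinite ν]
    (g : α × β → ℝ≥0∞) (hg : Measurable g) :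
    Measure.map Prod.fst ((μ.prod ν).withDensity g)
      = μ.withDensity (fun x => ∫⁻ y, g (x, y) ∂ν) := by
  ext A hA
  rw [Measure.map_apply measurable_fst hA, withDensity_apply _ (hA.preimage measurable_fst),
    withDensity_apply _ hA]
  have h1 : (Prod.fst ⁻¹' A : Set (α × β)) = A ×ˢ Set.univ := by ext p; simp
  rw [h1, ← Measure.restrict_prod_eq_prod_univ, lintegral_prod _ hg.aemeasurable]

lemma aux_subst_val {b : ℝ} (hb : 0 < b) :
    ∫ t in Ioi (0:ℝ), Real.exp (-(b * t⁻¹)) * t ^ (-(5:ℝ)/2)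
      = (1/b) ^ ((3:ℝ)/2) * Real.Gamma (3/2) := by
  have hgval : ∫ y in Ioi (0:ℝ), y ^ ((1:ℝ)/2) * Real.exp (-(b*y))
      = (1/b) ^ ((3:ℝ)/2) * Real.Gamma (3/2) := by
    have h := integral_rpow_mul_exp_neg_mul_Ioi (a := (3:ℝ)/2) (by norm_num) hb
    have h32 : (3:ℝ)/2 - 1 = 1/2 := by norm_num
    rw [h32] at h
    exact h
  have hsub := integral_comp_rpow_Ioi
    (fun y => y ^ ((1:ℝ)/2) * Real.exp (-(b*y))) (p := -1) (by norm_num)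
  rw [← hgval, ← hsub]
  refine setIntegral_congr_fun measurableSet_Ioi (fun t ht => ?_)
  have ht0 : (0:ℝ) < t := ht
  have h1 : (t ^ (-1:ℝ)) ^ ((1:ℝ)/2) = t ^ (-(1:ℝ)/2) := by
    rw [← Real.rpow_mul ht0.le]; norm_num
  have h2 : t ^ (-1:ℝ) = t⁻¹ := Real.rpow_neg_one t
  simp only [smul_eq_mul, h2]
  rw [← h2, h1, h2]
  have h3 : |(-1:ℝ)| * t ^ ((-1:ℝ)-1) = t ^ (-(2:ℝ)) := by norm_num
  rw [h3, mul_comm (t ^ (-(1:ℝ)/2)) (Real.exp (-(b*t⁻¹))), ← mul_assoc, mul_comm (t ^ (-(2:ℝ)))]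
  rw [mul_assoc, ← Real.rpow_add ht0]
  norm_num

lemma aux_subst_int {b : ℝ} (hb : 0 < b) :
    IntegrableOn (fun t => Real.exp (-(b * t⁻¹)) * t ^ (-(5:ℝ)/2)) (Ioi (0:ℝ)) := by
  have hg_int : IntegrableOn (fun y => y ^ ((1:ℝ)/2) * Real.exp (-(b*y))) (Ioi (0:ℝ)) := by
    have := integrableOn_rpow_mul_exp_neg_mul_rpow
      (s := (1:ℝ)/2) (p := 1) (by norm_num) zero_lt_one hb
    simpa [Real.rpow_one, neg_mul] using this
  have h := (integrableOn_Ioi_comp_rpow_iff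
    (fun y => y ^ ((1:ℝ)/2) * Real.exp (-(b*y))) (p := -1) (by norm_num)).mpr hg_int
  refine (integrableOn_congr_fun (fun t ht => ?_) measurableSet_Ioi).mp h
  have ht0 : (0:ℝ) < t := ht
  have h1 : (t ^ (-1:ℝ)) ^ ((1:ℝ)/2) = t ^ (-(1:ℝ)/2) := by
    rw [← Real.rpow_mul ht0.le]; norm_num
  have h2 : t ^ (-1:ℝ) = t⁻¹ := Real.rpow_neg_one t
  simp only [smul_eq_mul, h2]
  rw [← h2, h1, h2]
  have h3 : |(-1:ℝ)| * t ^ ((-1:ℝ)-1) = t ^ (-(2:ℝ)) := by norm_num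
  rw [h3, mul_comm (t ^ (-(1:ℝ)/2)) (Real.exp (-(b*t⁻¹))), ← mul_assoc, mul_comm (t ^ (-(2:ℝ)))]
  rw [mul_assoc, ← Real.rpow_add ht0]
  norm_num

lemma aux_const {a : ℝ} (ha : 0 < a) :
    (3:ℝ) ^ (-(5:ℝ)/8) / (8 * Real.sqrt (2 * Real.pi)) * a ^ ((1:ℝ)/2) *
      ((1/(a^2/(2*Real.sqrt 3))) ^ ((3:ℝ)/2) * Real.Gamma (3/2))
    = (3:ℝ) ^ ((1:ℝ)/8) / 8 * a ^ (-(5:ℝ)/2) := by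
  have hπ : (0:ℝ) < Real.pi := Real.pi_pos
  have hGamma : Real.Gamma (3/2) = Real.sqrt Real.pi / 2 := by
    have h : (3:ℝ)/2 = 1/2 + 1 := by norm_num
    rw [h, Real.Gamma_add_one (by norm_num), Real.Gamma_one_half_eq]
    ring
  have h2π : Real.sqrt (2*Real.pi) = Real.sqrt 2 * Real.sqrt Real.pi :=
    Real.sqrt_mul (by norm_num) _
  have hdiv : (1:ℝ)/(a^2/(2*Real.sqrt 3)) = 2*Real.sqrt 3 * (a^2)⁻¹ := by
    rw [one_div_div]; ring
  have hrw1 : ((2*Real.sqrt 3) * (a^2)⁻¹) ^ ((3:ℝ)/2)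
      = Real.sqrt 2 * 2 * (3:ℝ)^((3:ℝ)/4) * (a ^ ((3:ℝ)))⁻¹ := by
    rw [Real.mul_rpow (by positivity) (by positivity),
      Real.mul_rpow (by norm_num) (Real.sqrt_nonneg 3),
      Real.inv_rpow (by positivity), Real.sqrt_eq_rpow, Real.sqrt_eq_rpow,
      ← Real.rpow_natCast a 2,
      ← Real.rpow_mul (by norm_num : (0:ℝ) ≤ 3), ← Real.rpow_mul ha.le,
      show ((3:ℝ)/2) = 1/2 + 1 by norm_num,
      Real.rpow_add (by norm_num : (0:ℝ) < 2), Real.rpow_one]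
    norm_num
  have ha2 : a ^ ((1:ℝ)/2) * (a ^ ((3:ℝ)))⁻¹ = a ^ (-(5:ℝ)/2) := by
    rw [← Real.rpow_neg ha.le, ← Real.rpow_add ha]; norm_num
  have h3 : (3:ℝ)^(-(5:ℝ)/8) * (3:ℝ)^((3:ℝ)/4) = (3:ℝ)^((1:ℝ)/8) := by
    rw [← Real.rpow_add (by norm_num)]; norm_num
  rw [hGamma, h2π, hdiv, hrw1]
  have hs2 : Real.sqrt 2 ≠ 0 := by positivity
  have hsπ : Real.sqrt Real.pi ≠ 0 := by positivity
  rw [← ha2, ← h3]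
  field_simp

lemma aux_stepA {a : ℝ} (ha : 0 < a) :
    ∫⁻ t in Ioi (0:ℝ), ENNReal.ofReal
        ((3:ℝ) ^ (-(5:ℝ)/8) / (8 * Real.sqrt (2 * Real.pi)) * a ^ ((1:ℝ)/2) *
          Real.exp (-a^2 / (2 * Real.sqrt 3 * t)) * t ^ (-(5:ℝ)/2))
      = ENNReal.ofReal ((3:ℝ) ^ ((1:ℝ)/8) / 8 * a ^ (-(5:ℝ)/2)) := by
  set C : ℝ := (3:ℝ) ^ (-(5:ℝ)/8) / (8 * Real.sqrt (2 * Real.pi)) with hC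
  set b : ℝ := a^2/(2*Real.sqrt 3) with hbdef
  have hb : 0 < b := by positivity
  have hcongr : ∀ t ∈ Ioi (0:ℝ),
      C * a ^ ((1:ℝ)/2) * Real.exp (-a^2 / (2 * Real.sqrt 3 * t)) * t ^ (-(5:ℝ)/2)
      = C * a ^ ((1:ℝ)/2) * (Real.exp (-(b * t⁻¹)) * t ^ (-(5:ℝ)/2)) := by
    intro t ht
    have ht0 : (0:ℝ) < t := ht
    have harg : -a^2 / (2 * Real.sqrt 3 * t) = -(b * t⁻¹) := by
      rw [hbdef]
      field_simp
    rw [harg]; ring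
  rw [setLIntegral_congr_fun_ae measurableSet_Ioi (Filter.Eventually.of_forall fun t ht =>
    congrArg ENNReal.ofReal (hcongr t ht))]
  have hInt : IntegrableOn
      (fun t => C * a ^ ((1:ℝ)/2) * (Real.exp (-(b * t⁻¹)) * t ^ (-(5:ℝ)/2))) (Ioi (0:ℝ)) :=
    (aux_subst_int hb).const_mul _
  have hnn : 0 ≤ᵐ[volume.restrict (Ioi (0:ℝ))]
      fun t => C * a ^ ((1:ℝ)/2) * (Real.exp (-(b * t⁻¹)) * t ^ (-(5:ℝ)/2)) := by
    refine (ae_restrict_iff' measurableSet_Ioi).mpr (Filter.Eventually.of_forall fun t ht => ?_)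
    have ht0 : (0:ℝ) < t := ht
    positivity
  rw [← ofReal_integral_eq_lintegral_ofReal hInt hnn, integral_const_mul, aux_subst_val hb]
  exact congrArg ENNReal.ofReal (aux_const ha)

end Aux

/-- The marginal of `μ` in the first two coordinates: the law of the start point
of a backward cone excursion for `θ = 2π/3`, with density `(3^{1/8}/8)(l+r)^{−5/2}`. -/
theorem stmt_7 :
    Measure.map (fun p : ℝ × ℝ × ℝ => (p.1, p.2.1)) μ
    = (volume.restrict {q : ℝ × ℝ | 0 < q.1 ∧ 0 < q.2}).withDensity
        (fun q => ENNReal.ofReal ((3:ℝ) ^ ((1:ℝ)/8) / 8 * (q.1 + q.2) ^ (-(5:ℝ)/2))) := by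
  classical
  set S : Set (ℝ × ℝ × ℝ) := {p | 0 < p.1 ∧ 0 < p.2.1 ∧ 0 < p.2.2} with hSdef
  set f : ℝ × ℝ × ℝ → ℝ≥0∞ := fun p => ENNReal.ofReal
      ((3:ℝ) ^ (-(5:ℝ)/8) / (8 * Real.sqrt (2 * Real.pi)) * (p.1 + p.2.1) ^ ((1:ℝ)/2) *
        Real.exp (-(p.1 + p.2.1)^2 / (2 * Real.sqrt 3 * p.2.2)) * p.2.2 ^ (-(5:ℝ)/2)) with hfdef
  set T : Set (ℝ × ℝ) := {q | 0 < q.1 ∧ 0 < q.2} with hTdef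
  set f₂ : ℝ × ℝ → ℝ≥0∞ := fun q =>
    ENNReal.ofReal ((3:ℝ) ^ ((1:ℝ)/8) / 8 * (q.1 + q.2) ^ (-(5:ℝ)/2)) with hf2def
  have hSm : MeasurableSet S := by
    refine (measurableSet_lt measurable_const measurable_fst).inter ?_
    exact (measurableSet_lt measurable_const (measurable_fst.comp measurable_snd)).inter
      (measurableSet_lt measurable_const (measurable_snd.comp measurable_snd))
  have hTm : MeasurableSet T :=
    (measurableSet_lt measurable_const measurable_fst).inter
      (measurableSet_lt measurable_const measurable_snd)
  have hfm : Measurable f := by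
    rw [hfdef]
    have hrpow : ∀ c : ℝ, Measurable fun x : ℝ => x ^ c := fun c => by measurability
    have m1 : Measurable fun p : ℝ × ℝ × ℝ => p.1 + p.2.1 :=
      measurable_fst.add (measurable_fst.comp measurable_snd)
    have m3 : Measurable fun p : ℝ × ℝ × ℝ => p.2.2 := measurable_snd.comp measurable_snd
    exact ENNReal.measurable_ofReal.comp <|
      ((measurable_const.mul ((hrpow _).comp m1)).mul
        (Real.measurable_exp.comp (((m1.pow_const 2).neg).div (measurable_const.mul m3)))).mul
        ((hrpow _).comp m3)
  have hμ : μ = volume.withDensity (S.indicator f) := by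
    unfold μ
    exact (withDensity_indicator hSm f).symm
  let e : ℝ × ℝ × ℝ ≃ᵐ (ℝ × ℝ) × ℝ := MeasurableEquiv.prodAssoc.symm
  have he : MeasurePreserving e volume volume :=
    MeasurePreserving.symm _ volume_preserving_prodAssoc
  set g' : (ℝ × ℝ) × ℝ → ℝ≥0∞ := (S.indicator f) ∘ e.symm with hg'def
  have hg'm : Measurable g' := (hfm.indicator hSm).comp e.symm.measurable
  have hcomp : S.indicator f = g' ∘ e := by
    funext p
    simp [hg'def]
  have hmapπ : (fun p : ℝ × ℝ × ℝ => (p.1, p.2.1)) = Prod.fst ∘ e := rfl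
  have hdens : (fun q : ℝ × ℝ => ∫⁻ t, g' (q, t)) = T.indicator f₂ := by
    funext q
    have hg'q : ∀ t : ℝ, g' (q, t) = S.indicator f (q.1, q.2, t) := fun t => rfl
    by_cases hq : 0 < q.1 ∧ 0 < q.2
    · have hind : (fun t : ℝ => g' (q, t))
          = (Set.Ioi (0:ℝ)).indicator (fun t => f (q.1, q.2, t)) := by
        funext t
        rw [hg'q]
        by_cases ht : 0 < t
        · rw [Set.indicator_of_mem (show (q.1, q.2, t) ∈ S from ⟨hq.1, hq.2, ht⟩),
            Set.indicator_of_mem (show t ∈ Set.Ioi (0:ℝ) from ht)]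
        · rw [Set.indicator_of_notMem (fun hmem : (q.1, q.2, t) ∈ S => ht hmem.2.2),
            Set.indicator_of_notMem (show t ∉ Set.Ioi (0:ℝ) from ht)]
      rw [hind, lintegral_indicator measurableSet_Ioi]
      have ha : 0 < q.1 + q.2 := add_pos hq.1 hq.2
      rw [Set.indicator_of_mem (show q ∈ T from hq)]
      exact aux_stepA ha
    · have hzero : (fun t : ℝ => g' (q, t)) = fun _ => 0 := by
        funext t
        rw [hg'q]
        exact Set.indicator_of_notMem (fun hmem : (q.1, q.2, t) ∈ S =>
          hq ⟨hmem.1, hmem.2.1⟩) _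
      rw [hzero, lintegral_zero, Set.indicator_of_notMem (show q ∉ T from hq)]
  calc Measure.map (fun p : ℝ × ℝ × ℝ => (p.1, p.2.1)) μ
      = Measure.map Prod.fst (Measure.map e μ) := by
        rw [hmapπ, ← Measure.map_map measurable_fst e.measurable]
    _ = Measure.map Prod.fst ((volume : Measure ((ℝ × ℝ) × ℝ)).withDensity g') := by
        rw [hμ, hcomp, aux_map_equiv_withDensity e he g' hg'm]
    _ = (volume : Measure (ℝ × ℝ)).withDensity (fun q => ∫⁻ t, g' (q, t)) := by
        rw [Measure.volume_eq_prod, aux_map_fst_withDensity _ _ g' hg'm]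
    _ = (volume.restrict T).withDensity f₂ := by
        rw [hdens, withDensity_indicator hTm]
end

section
/- The pushforward, under the map (u, s, t) ↦ (u·s, (1−u)·s, t), of the product of Lebesgue measure on (0,1) with the measure ν on (0,∞)² having density (s, t) ↦ (3^{−5/8}/(8√(2π))) · s^{3/2} · exp(−s²/(2√3·t)) · t^{−5/2}, equals the measure μ. -/
open MeasureTheory Set
open scoped ENNReal

section aux

variable {α β : Type*} [MeasurableSpace α] [MeasurableSpace β]

lemma my_prod_withDensity (μ : Measure α) (ν : Measure β) [SFinite μ] [SFinite ν]
    {g : β → ℝ≥0∞} (hg : Measurable g) :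
    μ.prod (ν.withDensity g) = (μ.prod ν).withDensity (fun p => g p.2) := by
  ext s hs
  have hm : Measurable fun p : α × β => g p.2 := hg.comp measurable_snd
  rw [Measure.prod_apply hs, withDensity_apply _ hs,
    ← lintegral_indicator hs, lintegral_prod _ (hm.indicator hs).aemeasurable]
  congr 1
  funext x
  rw [withDensity_apply _ (measurable_prodMk_left hs), ← lintegral_indicator
    (measurable_prodMk_left hs)]
  rfl

lemma my_map_withDensity (m : Measure α) {f : α → β} (hf : Measurable f)
    {D : β → ℝ≥0∞} (hD : Measurable D) :
    Measure.map f (m.withDensity (fun x => D (f x))) = (Measure.map f m).withDensity D := by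
  ext s hs
  rw [Measure.map_apply hf hs, withDensity_apply _ (hf hs), withDensity_apply _ hs,
    setLIntegral_map hs hD hf]

end aux

noncomputable def e3 : (ℝ × ℝ × ℝ) ≃ₗ[ℝ] (Fin 3 → ℝ) where
  toFun p := ![p.1, p.2.1, p.2.2]
  invFun f := (f 0, f 1, f 2)
  map_add' p q := by funext i; fin_cases i <;> simp
  map_smul' c p := by funext i; fin_cases i <;> simp
  left_inv p := rfl
  right_inv f := by funext i; fin_cases i <;> simp

noncomputable def b3 : Module.Basis (Fin 3) ℝ (ℝ × ℝ × ℝ) := Module.Basis.ofEquivFun e3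

noncomputable def Amap : (ℝ × ℝ × ℝ) →L[ℝ] ℝ := ContinuousLinearMap.fst ℝ ℝ (ℝ × ℝ)
noncomputable def Bmap : (ℝ × ℝ × ℝ) →L[ℝ] ℝ :=
  (ContinuousLinearMap.fst ℝ ℝ ℝ).comp (ContinuousLinearMap.snd ℝ ℝ (ℝ × ℝ))
noncomputable def Cmap : (ℝ × ℝ × ℝ) →L[ℝ] ℝ :=
  (ContinuousLinearMap.snd ℝ ℝ ℝ).comp (ContinuousLinearMap.snd ℝ ℝ (ℝ × ℝ))

noncomputable def Jmap (u s : ℝ) : (ℝ × ℝ × ℝ) →L[ℝ] (ℝ × ℝ × ℝ) :=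
  (u • Bmap + s • Amap).prod (((1 - u) • Bmap + s • (-Amap)).prod Cmap)

lemma e3_symm_apply (f : Fin 3 → ℝ) : e3.symm f = (f 0, f 1, f 2) := rfl

lemma Jmap_det (u s : ℝ) : (Jmap u s).det = s := by
  have h : (Jmap u s : (ℝ × ℝ × ℝ) →ₗ[ℝ] (ℝ × ℝ × ℝ)) =
      Matrix.toLin b3 b3 !![s, u, 0; -s, 1 - u, 0; 0, 0, 1] := by
    apply b3.ext
    intro i
    rw [Matrix.toLin_self]
    fin_cases i <;>
      simp [b3, Jmap, Amap, Bmap, Cmap, Fin.sum_univ_three, Prod.ext_iff,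
        Pi.single_apply, e3_symm_apply]
  rw [ContinuousLinearMap.det, h, LinearMap.det_toLin]
  simp [Matrix.det_fin_three]; ring




open MeasureTheory

/-- The measure `ν` on `(0,∞)²` with density
`(s,t) ↦ (3^{−5/8}/(8√(2π))) s^{3/2} exp(−s²/(2√3 t)) t^{−5/2}`. -/
noncomputable def ν : Measure (ℝ × ℝ) :=
  (volume.restrict {q : ℝ × ℝ | 0 < q.1 ∧ 0 < q.2}).withDensity
    fun q => ENNReal.ofReal
      ((3:ℝ) ^ (-(5:ℝ)/8) / (8 * Real.sqrt (2 * Real.pi)) * q.1 ^ ((3:ℝ)/2) *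
        Real.exp (-q.1^2 / (2 * Real.sqrt 3 * q.2)) * q.2 ^ (-(5:ℝ)/2))

/-- Product decomposition of `μ`: under the cone excursion measure for
`θ = 2π/3`, conditionally on `‖e(0)‖₁`, the angular part of the start point
is uniform and independent of the duration. -/
theorem stmt_14 :
    Measure.map (fun p : ℝ × ℝ × ℝ => (p.1 * p.2.1, (1 - p.1) * p.2.1, p.2.2))
      ((volume.restrict (Set.Ioo (0:ℝ) 1)).prod ν) = μ := by
  set T : ℝ × ℝ × ℝ → ℝ × ℝ × ℝ := fun p => (p.1 * p.2.1, (1 - p.1) * p.2.1, p.2.2) with hTdef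
  set D : ℝ × ℝ × ℝ → ℝ≥0∞ := fun p => ENNReal.ofReal
      ((3:ℝ) ^ (-(5:ℝ)/8) / (8 * Real.sqrt (2 * Real.pi)) * (p.1 + p.2.1) ^ ((1:ℝ)/2) *
        Real.exp (-(p.1 + p.2.1)^2 / (2 * Real.sqrt 3 * p.2.2)) * p.2.2 ^ (-(5:ℝ)/2))
    with hDdef
  set g : ℝ × ℝ → ℝ≥0∞ := fun q => ENNReal.ofReal
      ((3:ℝ) ^ (-(5:ℝ)/8) / (8 * Real.sqrt (2 * Real.pi)) * q.1 ^ ((3:ℝ)/2) *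
        Real.exp (-q.1^2 / (2 * Real.sqrt 3 * q.2)) * q.2 ^ (-(5:ℝ)/2))
    with hgdef
  have hB2 : MeasurableSet {q : ℝ × ℝ | 0 < q.1 ∧ 0 < q.2} := by
    have : {q : ℝ × ℝ | 0 < q.1 ∧ 0 < q.2} = Set.Ioi (0:ℝ) ×ˢ Set.Ioi (0:ℝ) := rfl
    rw [this]; exact measurableSet_Ioi.prod measurableSet_Ioi
  set S : Set (ℝ × ℝ × ℝ) := Set.Ioo (0:ℝ) 1 ×ˢ {q : ℝ × ℝ | 0 < q.1 ∧ 0 < q.2} with hSdef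
  have hS : MeasurableSet S := measurableSet_Ioo.prod hB2
  have hTm : Measurable T := by fun_prop
  have hg : Measurable g := by
    apply Measurable.ennreal_ofReal
    fun_prop
  have hD : Measurable D := by
    apply Measurable.ennreal_ofReal
    fun_prop
  -- Step 1: the source measure as a withDensity over S
  have h1 : (volume.restrict (Set.Ioo (0:ℝ) 1)).prod ν
      = (volume.restrict S).withDensity fun p => g p.2 := by
    rw [ν, my_prod_withDensity _ _ hg, Measure.prod_restrict, ← Measure.volume_eq_prod]
  -- Derivative
  have hderiv : ∀ x ∈ S, HasFDerivWithinAt T (Jmap x.1 x.2.1) S x := by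
    intro x _
    apply HasFDerivAt.hasFDerivWithinAt
    have hA : HasFDerivAt (fun p : ℝ × ℝ × ℝ => p.1) Amap x := Amap.hasFDerivAt
    have hB : HasFDerivAt (fun p : ℝ × ℝ × ℝ => p.2.1) Bmap x := Bmap.hasFDerivAt
    have hC : HasFDerivAt (fun p : ℝ × ℝ × ℝ => p.2.2) Cmap x := Cmap.hasFDerivAt
    have hc : HasFDerivAt (fun p : ℝ × ℝ × ℝ => 1 - p.1) (-Amap) x := by
      have := (hasFDerivAt_const (1:ℝ) x).sub hA; rwa [zero_sub] at this
    exact HasFDerivAt.prodMk (hA.mul hB) (HasFDerivAt.prodMk (hc.mul hB) hC)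
  -- Injectivity
  have hinj : Set.InjOn T S := by
    rintro ⟨u1, s1, t1⟩ hx ⟨u2, s2, t2⟩ hy h
    simp only [hSdef, Set.mem_prod, Set.mem_Ioo, Set.mem_setOf_eq] at hx hy
    simp only [hTdef, Prod.mk.injEq] at h
    obtain ⟨h1, h2, h3⟩ := h
    have hs : s1 = s2 := by nlinarith [h1, h2]
    have hu : u1 = u2 := by
      have hne : s1 ≠ 0 := ne_of_gt hx.2.1
      rw [← hs] at h1
      exact mul_right_cancel₀ hne h1
    simp [hu, hs, h3]
  -- Image
  have himg : T '' S = {p : ℝ × ℝ × ℝ | 0 < p.1 ∧ 0 < p.2.1 ∧ 0 < p.2.2} := by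
    ext ⟨l, r, t⟩
    simp only [hTdef, hSdef, Set.mem_image, Set.mem_prod, Set.mem_Ioo, Set.mem_setOf_eq,
      Prod.mk.injEq, Prod.exists]
    constructor
    · rintro ⟨u, s, t', ⟨⟨hu0, hu1⟩, hs, ht⟩, rfl, rfl, rfl⟩
      exact ⟨mul_pos hu0 hs, mul_pos (by linarith) hs, ht⟩
    · rintro ⟨hl, hr, ht⟩
      have hlr : (0:ℝ) < l + r := by linarith
      refine ⟨l / (l + r), l + r, t, ⟨⟨div_pos hl hlr, (div_lt_one hlr).2 (by linarith)⟩,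
        hlr, ht⟩, ?_, ?_, rfl⟩
      · field_simp
      · field_simp
        ring
  -- pointwise density identity on S
  have key : ∀ p ∈ S, g p.2 = ENNReal.ofReal |(Jmap p.1 p.2.1).det| * D (T p) := by
    rintro ⟨u, s, t⟩ hp
    simp only [hSdef, Set.mem_prod, Set.mem_Ioo, Set.mem_setOf_eq] at hp
    obtain ⟨⟨hu0, hu1⟩, hs, ht⟩ := hp
    rw [Jmap_det, abs_of_pos hs, hgdef, hDdef]
    simp only [hTdef]
    have hsum : u * s + (1 - u) * s = s := by ring
    rw [hsum, ← ENNReal.ofReal_mul hs.le]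
    congr 1
    have h32 : s ^ ((3:ℝ)/2) = s * s ^ ((1:ℝ)/2) := by
      rw [show (3:ℝ)/2 = 1 + 1/2 by norm_num, Real.rpow_add hs, Real.rpow_one]
    rw [h32]
    ring
  -- assemble
  haveI : (volume : Measure (ℝ × ℝ)).IsAddHaarMeasure := Measure.prod.instIsAddHaarMeasure _ _
  haveI : (volume : Measure (ℝ × ℝ × ℝ)).IsAddHaarMeasure := Measure.prod.instIsAddHaarMeasure _ _
  rw [h1, withDensity_congr_ae (Filter.Eventually.mono (ae_restrict_mem hS) key),
    show (fun p : ℝ × ℝ × ℝ => ENNReal.ofReal |(Jmap p.1 p.2.1).det| * D (T p))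
      = (fun p : ℝ × ℝ × ℝ => ENNReal.ofReal |(Jmap p.1 p.2.1).det|) * (fun p => D (T p))
      from rfl,
    withDensity_mul _ (by simp only [Jmap_det]; fun_prop) (show Measurable fun p => D (T p) from hD.comp hTm),
    my_map_withDensity _ hTm hD,
    map_withDensity_abs_det_fderiv_eq_addHaar volume hS.nullMeasurableSet hderiv hinj,
    himg]
  rfl
end

section
/- Let λ > 0, set c := (2√3)⁻¹, and let a, b ∈ ℝ satisfy a > −2√(cλ) and b > −2√(cλ). Then the function (l, r, t) ↦ 1 − e^{−a·l − b·r − λ·t} is integrable with respect to the measure μ on (0,∞)³. -/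
open MeasureTheory Real Set
open scoped ENNReal

lemma hlp_abs_one_sub_exp (y : ℝ) :
    |1 - Real.exp (-y)| ≤ min 1 |y| * Real.exp (max (-y) 0) := by
  rcases le_or_gt 0 y with hy | hy
  · have h1 : Real.exp (-y) ≤ 1 := Real.exp_le_one_iff.mpr (by linarith)
    have h2 : 1 - Real.exp (-y) ≤ y := by
      have := Real.add_one_le_exp (-y); linarith
    have h3 : max (-y) 0 = 0 := max_eq_right (by linarith)
    rw [h3, Real.exp_zero, mul_one, abs_of_nonneg hy,
      abs_of_nonneg (by linarith : (0:ℝ) ≤ 1 - Real.exp (-y))]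
    exact le_min (by nlinarith [Real.exp_pos (-y)]) h2
  · have h0 : 1 ≤ Real.exp (-y) := Real.one_le_exp (by linarith)
    have h3 : max (-y) 0 = -y := max_eq_left (by linarith)
    rw [abs_of_nonpos (by linarith), abs_of_neg hy, h3]
    have hmul : Real.exp y * Real.exp (-y) = 1 := by rw [← Real.exp_add]; simp
    have h2 : y + 1 ≤ Real.exp y := Real.add_one_le_exp y
    rcases min_cases 1 (-y) with ⟨he, h1y⟩ | ⟨he, h1y⟩ <;> rw [he] <;>
      nlinarith [Real.exp_pos (-y), Real.exp_pos y]


lemma hlp_exp_neg_le_inv {x : ℝ} (hx : 0 < x) : Real.exp (-x) ≤ x⁻¹ := by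
  rw [Real.exp_neg]
  have h1 : x ≤ Real.exp x := by have := Real.add_one_le_exp x; linarith
  exact inv_anti₀ hx h1


lemma hlp_exp_neg_le_sq {x : ℝ} (hx : 0 < x) : Real.exp (-x) ≤ 4 / x ^ 2 := by
  have h1 : x / 2 + 1 ≤ Real.exp (x/2) := Real.add_one_le_exp _
  have h3 : Real.exp (x/2) * Real.exp (x/2) = Real.exp x := by
    rw [← Real.exp_add]; ring_nf
  rw [Real.exp_neg, inv_le_iff_one_le_mul₀ (Real.exp_pos x), div_mul_eq_mul_div,
    le_div_iff₀ (by positivity)]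
  nlinarith [Real.exp_pos (x/2)]


lemma hlp_amgm {A B : ℝ} (hA : 0 ≤ A) (hB : 0 ≤ B) : 2 * Real.sqrt (A * B) ≤ A + B := by
  nlinarith [sq_nonneg (Real.sqrt A - Real.sqrt B), Real.sq_sqrt hA, Real.sq_sqrt hB,
    Real.sqrt_nonneg A, Real.sqrt_nonneg B, Real.sqrt_mul hA B]


/-- Convert a set integral of a nonnegative integrable function to a lintegral. -/
lemma hlp_lint_eq {s : Set ℝ} (hs : MeasurableSet s) {g : ℝ → ℝ} (hg : IntegrableOn g s)
    (h0 : ∀ x ∈ s, 0 ≤ g x) :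
    ∫⁻ x in s, ENNReal.ofReal (g x) = ENNReal.ofReal (∫ x in s, g x) :=
  (ofReal_integral_eq_lintegral_ofReal hg ((ae_restrict_iff' hs).mpr (.of_forall h0))).symm


lemma hlp_int_Ioc_rpow {β : ℝ} (hβ : 0 < β) {q : ℝ} (hq : -1 < q) :
    IntegrableOn (fun t : ℝ => t ^ q) (Ioc 0 β) ∧
      (∫ t in Ioc (0:ℝ) β, t ^ q) = β ^ (q+1) / (q+1) := by
  constructor
  · exact (intervalIntegrable_iff_integrableOn_Ioc_of_le hβ.le).mp
      (intervalIntegral.intervalIntegrable_rpow' hq)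
  · rw [← intervalIntegral.integral_of_le hβ.le, integral_rpow (Or.inl hq),
      Real.zero_rpow (by linarith)]
    ring


/-- Key t-integral bound, exponent -5/2. -/
lemma hlp_TA {β : ℝ} (hβ : 0 < β) :
    ∫⁻ t in Ioi (0:ℝ), ENNReal.ofReal (t ^ (-(5:ℝ)/2) * Real.exp (-(β/t)))
      ≤ ENNReal.ofReal (9 * β ^ (-(3:ℝ)/2)) := by
  rw [← Ioc_union_Ioi_eq_Ioi hβ.le,
    lintegral_union measurableSet_Ioi (Ioc_disjoint_Ioi le_rfl)]
  have hpart1 : ∫⁻ t in Ioc (0:ℝ) β, ENNReal.ofReal (t ^ (-(5:ℝ)/2) * Real.exp (-(β/t)))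
      ≤ ENNReal.ofReal ((8:ℝ) * β ^ (-(3:ℝ)/2)) := by
    have hb : ∀ t ∈ Ioc (0:ℝ) β, ENNReal.ofReal (t ^ (-(5:ℝ)/2) * Real.exp (-(β/t)))
        ≤ ENNReal.ofReal ((4 * β ^ (-(2:ℝ))) * t ^ (-(1:ℝ)/2)) := by
      intro t ht
      apply ENNReal.ofReal_le_ofReal
      have ht0 : 0 < t := ht.1
      have hexp : Real.exp (-(β/t)) ≤ 4 / (β/t)^2 := hlp_exp_neg_le_sq (by positivity)
      have h2 : 4 / (β/t)^2 = 4 * β^(-(2:ℝ)) * t^(2:ℝ) := by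
        rw [div_pow, Real.rpow_neg hβ.le, Real.rpow_two, Real.rpow_two]
        field_simp
      calc t ^ (-(5:ℝ)/2) * Real.exp (-(β/t)) ≤ t ^ (-(5:ℝ)/2) * (4 * β^(-(2:ℝ)) * t^(2:ℝ)) := by
            rw [← h2]; exact mul_le_mul_of_nonneg_left hexp (by positivity)
        _ = 4 * β ^ (-(2:ℝ)) * t ^ (-(1:ℝ)/2) := by
            rw [mul_comm (t ^ (-(5:ℝ)/2)), mul_assoc, ← Real.rpow_add ht0]
            norm_num
    refine le_trans (setLIntegral_mono (by fun_prop) hb) ?_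
    obtain ⟨hint, hval⟩ := hlp_int_Ioc_rpow hβ (by norm_num : (-1:ℝ) < -(1:ℝ)/2)
    rw [hlp_lint_eq measurableSet_Ioc (hint.const_mul _) ?_]
    · apply ENNReal.ofReal_le_ofReal
      have hval2 : (∫ t in Ioc (0:ℝ) β, t ^ (-(1:ℝ)/2)) = 2 * β ^ ((1:ℝ)/2) := by
        rw [hval]; norm_num; ring
      rw [integral_const_mul, hval2]
      have hcollapse : β ^ (-(2:ℝ)) * β ^ ((1:ℝ)/2) = β ^ (-(3:ℝ)/2) := by
        rw [← Real.rpow_add hβ]; norm_num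
      rw [← hcollapse]; ring_nf
      exact le_refl _
    · intro t ht
      have := ht.1
      positivity
  have hpart2 : ∫⁻ t in Ioi β, ENNReal.ofReal (t ^ (-(5:ℝ)/2) * Real.exp (-(β/t)))
      ≤ ENNReal.ofReal ((2/3:ℝ) * β ^ (-(3:ℝ)/2)) := by
    have hb : ∀ t ∈ Ioi β, ENNReal.ofReal (t ^ (-(5:ℝ)/2) * Real.exp (-(β/t)))
        ≤ ENNReal.ofReal (t ^ (-(5:ℝ)/2)) := by
      intro t ht
      apply ENNReal.ofReal_le_ofReal
      have ht0 : 0 < t := hβ.trans ht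
      nlinarith [Real.exp_le_one_iff.mpr (neg_nonpos.mpr (show (0:ℝ) ≤ β/t by positivity)),
        Real.rpow_nonneg ht0.le (-(5:ℝ)/2), Real.exp_pos (-(β/t))]
    refine le_trans (setLIntegral_mono (by fun_prop) hb) ?_
    rw [hlp_lint_eq measurableSet_Ioi (integrableOn_Ioi_rpow_of_lt (by norm_num) hβ)
      (fun t ht => Real.rpow_nonneg (hβ.trans ht).le _)]
    apply ENNReal.ofReal_le_ofReal
    rw [integral_Ioi_rpow_of_lt (by norm_num) hβ]
    have : -(5:ℝ)/2 + 1 = -(3:ℝ)/2 := by norm_num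
    rw [this]
    ring_nf
    exact le_refl _
  calc _ ≤ ENNReal.ofReal ((8:ℝ) * β ^ (-(3:ℝ)/2)) + ENNReal.ofReal ((2/3:ℝ) * β ^ (-(3:ℝ)/2)) :=
        add_le_add hpart1 hpart2
    _ ≤ _ := by
        rw [← ENNReal.ofReal_add (by positivity) (by positivity)]
        apply ENNReal.ofReal_le_ofReal
        nlinarith [Real.rpow_nonneg hβ.le (-(3:ℝ)/2)]

/-- Key t-integral bound, exponent -3/2. -/
lemma hlp_TB {β : ℝ} (hβ : 0 < β) :
    ∫⁻ t in Ioi (0:ℝ), ENNReal.ofReal (t ^ (-(3:ℝ)/2) * Real.exp (-(β/t)))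
      ≤ ENNReal.ofReal (4 * β ^ (-(1:ℝ)/2)) := by
  rw [← Ioc_union_Ioi_eq_Ioi hβ.le,
    lintegral_union measurableSet_Ioi (Ioc_disjoint_Ioi le_rfl)]
  have hpart1 : ∫⁻ t in Ioc (0:ℝ) β, ENNReal.ofReal (t ^ (-(3:ℝ)/2) * Real.exp (-(β/t)))
      ≤ ENNReal.ofReal ((2:ℝ) * β ^ (-(1:ℝ)/2)) := by
    have hb : ∀ t ∈ Ioc (0:ℝ) β, ENNReal.ofReal (t ^ (-(3:ℝ)/2) * Real.exp (-(β/t)))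
        ≤ ENNReal.ofReal ((β ^ (-(1:ℝ))) * t ^ (-(1:ℝ)/2)) := by
      intro t ht
      apply ENNReal.ofReal_le_ofReal
      have ht0 : 0 < t := ht.1
      have hexp : Real.exp (-(β/t)) ≤ (β/t)⁻¹ := hlp_exp_neg_le_inv (by positivity)
      have h2 : (β/t)⁻¹ = β^(-(1:ℝ)) * t^(1:ℝ) := by
        rw [Real.rpow_neg hβ.le, Real.rpow_one, Real.rpow_one]
        field_simp
      calc t ^ (-(3:ℝ)/2) * Real.exp (-(β/t)) ≤ t ^ (-(3:ℝ)/2) * (β^(-(1:ℝ)) * t^(1:ℝ)) := by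
            rw [← h2]; exact mul_le_mul_of_nonneg_left hexp (by positivity)
        _ = β ^ (-(1:ℝ)) * t ^ (-(1:ℝ)/2) := by
            rw [mul_comm (t ^ (-(3:ℝ)/2)), mul_assoc, ← Real.rpow_add ht0]
            norm_num
    refine le_trans (setLIntegral_mono (by fun_prop) hb) ?_
    obtain ⟨hint, hval⟩ := hlp_int_Ioc_rpow hβ (by norm_num : (-1:ℝ) < -(1:ℝ)/2)
    rw [hlp_lint_eq measurableSet_Ioc (hint.const_mul _)
      (fun t ht => by have := ht.1; positivity)]
    apply ENNReal.ofReal_le_ofReal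
    have hval2 : (∫ t in Ioc (0:ℝ) β, t ^ (-(1:ℝ)/2)) = 2 * β ^ ((1:ℝ)/2) := by
      rw [hval]; norm_num; ring
    rw [integral_const_mul, hval2]
    have hcollapse : β ^ (-(1:ℝ)) * β ^ ((1:ℝ)/2) = β ^ (-(1:ℝ)/2) := by
      rw [← Real.rpow_add hβ]; norm_num
    rw [← hcollapse]; ring_nf
    exact le_refl _
  have hpart2 : ∫⁻ t in Ioi β, ENNReal.ofReal (t ^ (-(3:ℝ)/2) * Real.exp (-(β/t)))
      ≤ ENNReal.ofReal ((2:ℝ) * β ^ (-(1:ℝ)/2)) := by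
    have hb : ∀ t ∈ Ioi β, ENNReal.ofReal (t ^ (-(3:ℝ)/2) * Real.exp (-(β/t)))
        ≤ ENNReal.ofReal (t ^ (-(3:ℝ)/2)) := by
      intro t ht
      apply ENNReal.ofReal_le_ofReal
      have ht0 : 0 < t := hβ.trans ht
      nlinarith [Real.exp_le_one_iff.mpr (neg_nonpos.mpr (show (0:ℝ) ≤ β/t by positivity)),
        Real.rpow_nonneg ht0.le (-(3:ℝ)/2), Real.exp_pos (-(β/t))]
    refine le_trans (setLIntegral_mono (by fun_prop) hb) ?_
    rw [hlp_lint_eq measurableSet_Ioi (integrableOn_Ioi_rpow_of_lt (by norm_num) hβ)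
      (fun t ht => Real.rpow_nonneg (hβ.trans ht).le _)]
    apply ENNReal.ofReal_le_ofReal
    rw [integral_Ioi_rpow_of_lt (by norm_num) hβ]
    have : -(3:ℝ)/2 + 1 = -(1:ℝ)/2 := by norm_num
    rw [this]
    ring_nf
    exact le_refl _
  calc _ ≤ ENNReal.ofReal ((2:ℝ) * β ^ (-(1:ℝ)/2)) + ENNReal.ofReal ((2:ℝ) * β ^ (-(1:ℝ)/2)) :=
        add_le_add hpart1 hpart2
    _ ≤ _ := by
        rw [← ENNReal.ofReal_add (by positivity) (by positivity)]
        apply ENNReal.ofReal_le_ofReal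
        nlinarith [Real.rpow_nonneg hβ.le (-(1:ℝ)/2)]

lemma hlp_shift (l : ℝ) (F : ℝ → ℝ≥0∞) :
    ∫⁻ r in Ioi (0:ℝ), F (l + r) = ∫⁻ s in Ioi l, F s := by
  have hp : (fun r : ℝ => l + r) ⁻¹' (Ioi l) = Ioi 0 := by ext r; simp
  rw [← (measurePreserving_add_left volume l).setLIntegral_comp_preimage_emb
    (MeasurableEquiv.addLeft l).measurableEmbedding F (Ioi l), hp]


lemma hlp_lint_Ioi_rpow {l q : ℝ} (hl : 0 < l) (hq : q < -1) :
    ∫⁻ s in Ioi l, ENNReal.ofReal (s ^ q) = ENNReal.ofReal (-l ^ (q+1) / (q+1)) := by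
  rw [hlp_lint_eq measurableSet_Ioi (integrableOn_Ioi_rpow_of_lt hq hl)
    (fun s hs => Real.rpow_nonneg (hl.trans hs).le _), integral_Ioi_rpow_of_lt hq hl]


lemma hlp_R1 {l : ℝ} (hl : 0 < l) :
    ∫⁻ s in Ioi l, ENNReal.ofReal (min (s ^ (-(5:ℝ)/2)) (s ^ (-(1:ℝ)/2)))
      ≤ ENNReal.ofReal ((8/3) * min 1 (l ^ (-(3:ℝ)/2))) := by
  rcases le_or_gt 1 l with h1 | h1
  · have hmin : min 1 (l ^ (-(3:ℝ)/2)) = l ^ (-(3:ℝ)/2) :=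
      min_eq_right (Real.rpow_le_one_of_one_le_of_nonpos h1 (by norm_num))
    calc _ ≤ ∫⁻ s in Ioi l, ENNReal.ofReal (s ^ (-(5:ℝ)/2)) :=
          setLIntegral_mono (by fun_prop)
            (fun s _ => ENNReal.ofReal_le_ofReal (min_le_left _ _))
      _ ≤ _ := by
          rw [hlp_lint_Ioi_rpow hl (by norm_num), hmin]
          apply ENNReal.ofReal_le_ofReal
          have : -(5:ℝ)/2 + 1 = -(3:ℝ)/2 := by norm_num
          rw [this]
          nlinarith [Real.rpow_nonneg hl.le (-(3:ℝ)/2)]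
  · have hmin : min 1 (l ^ (-(3:ℝ)/2)) = 1 :=
      min_eq_left (Real.one_le_rpow_of_pos_of_le_one_of_nonpos hl h1.le (by norm_num))
    rw [hmin, ← Ioc_union_Ioi_eq_Ioi h1.le, lintegral_union measurableSet_Ioi
      (Ioc_disjoint_Ioi le_rfl)]
    have p1 : ∫⁻ s in Ioc l 1, ENNReal.ofReal (min (s ^ (-(5:ℝ)/2)) (s ^ (-(1:ℝ)/2)))
        ≤ ENNReal.ofReal 2 := by
      calc _ ≤ ∫⁻ s in Ioc l 1, ENNReal.ofReal (s ^ (-(1:ℝ)/2)) :=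
            setLIntegral_mono (by fun_prop)
              (fun s _ => ENNReal.ofReal_le_ofReal (min_le_right _ _))
        _ ≤ ∫⁻ s in Ioc (0:ℝ) 1, ENNReal.ofReal (s ^ (-(1:ℝ)/2)) :=
            lintegral_mono_set (Ioc_subset_Ioc_left hl.le)
        _ ≤ ENNReal.ofReal 2 := by
            obtain ⟨hint, hval⟩ := hlp_int_Ioc_rpow one_pos (by norm_num : (-1:ℝ) < -(1:ℝ)/2)
            rw [hlp_lint_eq measurableSet_Ioc hint (fun s hs => Real.rpow_nonneg hs.1.le _),
              hval]
            apply ENNReal.ofReal_le_ofReal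
            norm_num
    have p2 : ∫⁻ s in Ioi (1:ℝ), ENNReal.ofReal (min (s ^ (-(5:ℝ)/2)) (s ^ (-(1:ℝ)/2)))
        ≤ ENNReal.ofReal (2/3) := by
      calc _ ≤ ∫⁻ s in Ioi (1:ℝ), ENNReal.ofReal (s ^ (-(5:ℝ)/2)) :=
            setLIntegral_mono (by fun_prop)
              (fun s _ => ENNReal.ofReal_le_ofReal (min_le_left _ _))
        _ ≤ ENNReal.ofReal (2/3) := by
            rw [hlp_lint_Ioi_rpow one_pos (by norm_num)]
            apply ENNReal.ofReal_le_ofReal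
            norm_num
    calc _ ≤ ENNReal.ofReal 2 + ENNReal.ofReal (2/3) := add_le_add p1 p2
      _ ≤ _ := by
          rw [← ENNReal.ofReal_add (by norm_num) (by norm_num)]
          apply ENNReal.ofReal_le_ofReal
          norm_num


lemma hlp_R2 {l δ : ℝ} (hl : 0 < l) (hδ : 0 < δ) :
    ∫⁻ s in Ioi l, ENNReal.ofReal (s ^ (-(3:ℝ)/2) * Real.exp (-(δ*s)))
      ≤ ENNReal.ofReal (2 * (l ^ (-(1:ℝ)/2) * Real.exp (-(δ*l)))) := by
  calc _ ≤ ∫⁻ s in Ioi l, ENNReal.ofReal (Real.exp (-(δ*l)) * s ^ (-(3:ℝ)/2)) := by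
        refine setLIntegral_mono (by fun_prop) (fun s hs => ENNReal.ofReal_le_ofReal ?_)
        rw [mul_comm]
        exact mul_le_mul_of_nonneg_right
          (Real.exp_le_exp.mpr (by nlinarith [mem_Ioi.mp hs]))
          (Real.rpow_nonneg (hl.trans hs).le _)
    _ = ENNReal.ofReal (Real.exp (-(δ*l))) * ∫⁻ s in Ioi l, ENNReal.ofReal (s ^ (-(3:ℝ)/2)) := by
        simp_rw [ENNReal.ofReal_mul (Real.exp_nonneg _)]
        rw [lintegral_const_mul _ (by fun_prop)]
    _ ≤ _ := by
        rw [hlp_lint_Ioi_rpow hl (by norm_num), ← ENNReal.ofReal_mul (Real.exp_nonneg _)]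
        apply ENNReal.ofReal_le_ofReal
        have : -(3:ℝ)/2 + 1 = -(1:ℝ)/2 := by norm_num
        rw [this]
        nlinarith [Real.rpow_nonneg hl.le (-(1:ℝ)/2), Real.exp_pos (-(δ*l)),
          (Real.exp_pos (-(δ*l))).le]


lemma hlp_fin1 : ∫⁻ l in Ioi (0:ℝ), ENNReal.ofReal (min 1 (l ^ (-(3:ℝ)/2))) < ⊤ := by
  rw [← Ioc_union_Ioi_eq_Ioi (zero_le_one), lintegral_union measurableSet_Ioi
    (Ioc_disjoint_Ioi le_rfl)]
  have h1 : ∫⁻ l in Ioc (0:ℝ) 1, ENNReal.ofReal (min 1 (l ^ (-(3:ℝ)/2))) ≤ 1 := by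
    calc _ ≤ ∫⁻ _ in Ioc (0:ℝ) 1, 1 :=
          setLIntegral_mono (by fun_prop) (fun l _ => by
            simpa using ENNReal.ofReal_le_ofReal (min_le_left _ _))
      _ ≤ 1 := by simp [Real.volume_Ioc]
  have h2 : ∫⁻ l in Ioi (1:ℝ), ENNReal.ofReal (min 1 (l ^ (-(3:ℝ)/2))) < ⊤ := by
    calc _ ≤ ∫⁻ l in Ioi (1:ℝ), ENNReal.ofReal (l ^ (-(3:ℝ)/2)) :=
          setLIntegral_mono (by fun_prop)
            (fun l _ => ENNReal.ofReal_le_ofReal (min_le_right _ _))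
      _ < ⊤ := by rw [hlp_lint_Ioi_rpow one_pos (by norm_num)]; exact ENNReal.ofReal_lt_top
  exact ENNReal.add_lt_top.mpr ⟨lt_of_le_of_lt h1 ENNReal.one_lt_top, h2⟩


lemma hlp_fin2 {δ : ℝ} (hδ : 0 < δ) :
    ∫⁻ l in Ioi (0:ℝ), ENNReal.ofReal (l ^ (-(1:ℝ)/2) * Real.exp (-(δ*l))) < ⊤ := by
  rw [← Ioc_union_Ioi_eq_Ioi (zero_le_one), lintegral_union measurableSet_Ioi
    (Ioc_disjoint_Ioi le_rfl)]
  have h1 : ∫⁻ l in Ioc (0:ℝ) 1, ENNReal.ofReal (l ^ (-(1:ℝ)/2) * Real.exp (-(δ*l))) < ⊤ := by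
    have hint : IntegrableOn (fun l : ℝ => l ^ (-(1:ℝ)/2)) (Ioc 0 1) :=
      (intervalIntegrable_iff_integrableOn_Ioc_of_le zero_le_one).mp
        (intervalIntegral.intervalIntegrable_rpow' (by norm_num))
    calc _ ≤ ∫⁻ l in Ioc (0:ℝ) 1, ENNReal.ofReal (l ^ (-(1:ℝ)/2)) := by
          refine setLIntegral_mono (by fun_prop) (fun l hl => ENNReal.ofReal_le_ofReal ?_)
          nlinarith [Real.exp_le_one_iff.mpr (show -(δ*l) ≤ 0 by nlinarith [hl.1]),
            Real.rpow_nonneg hl.1.le (-(1:ℝ)/2), Real.exp_pos (-(δ*l))]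
      _ < ⊤ := by
          rw [hlp_lint_eq measurableSet_Ioc hint (fun l hl => Real.rpow_nonneg hl.1.le _)]
          exact ENNReal.ofReal_lt_top
  have h2 : ∫⁻ l in Ioi (1:ℝ), ENNReal.ofReal (l ^ (-(1:ℝ)/2) * Real.exp (-(δ*l))) < ⊤ := by
    calc _ ≤ ∫⁻ l in Ioi (1:ℝ), ENNReal.ofReal (Real.exp (-(δ*l))) := by
          refine setLIntegral_mono (by fun_prop) (fun l hl => ENNReal.ofReal_le_ofReal ?_)
          have h1l : (1:ℝ) ≤ l := (mem_Ioi.mp hl).le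
          have : l ^ (-(1:ℝ)/2) ≤ 1 := Real.rpow_le_one_of_one_le_of_nonpos h1l (by norm_num)
          nlinarith [Real.exp_pos (-(δ*l)), Real.rpow_nonneg (by linarith : (0:ℝ) ≤ l) (-(1:ℝ)/2)]
      _ < ⊤ := by
          rw [hlp_lint_eq measurableSet_Ioi ?_ (fun l _ => (Real.exp_pos _).le)]
          · exact ENNReal.ofReal_lt_top
          · simpa [neg_mul, mul_comm] using exp_neg_integrableOn_Ioi 1 hδ
  exact ENNReal.add_lt_top.mpr ⟨h1, h2⟩

set_option maxHeartbeats 1000000 in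
/-- The inner `t`-integral bound. -/
lemma hlp_keyt {lam c C₀ m θ δ ε K A a b : ℝ}
    (hlam : 0 < lam) (hc : c = (2 * Real.sqrt 3)⁻¹) (hC₀ : 0 ≤ C₀)
    (hm : m = 2 * Real.sqrt (c * lam)) (hθ : θ = max (max (-a) (-b)) 0)
    (hδ : δ = (m - θ) / 2) (hε : ε = δ / m) (hθm : θ < m)
    (hK : K = max (max |a| |b|) 1)
    (hA₁ : 9 * C₀ * c ^ (-(3:ℝ)/2) ≤ A) (hA₂ : 4 * lam * C₀ * c ^ (-(1:ℝ)/2) ≤ A)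
    (hA₃ : 9 * C₀ * K * (ε * c) ^ (-(3:ℝ)/2) ≤ A)
    {l r : ℝ} (hl : 0 < l) (hr : 0 < r) :
    ∫⁻ t in Ioi (0:ℝ),
      ENNReal.ofReal (C₀ * (l + r) ^ ((1:ℝ)/2) *
          Real.exp (-(l + r)^2 / (2 * Real.sqrt 3 * t)) * t ^ (-(5:ℝ)/2)) *
        ENNReal.ofReal ‖1 - Real.exp (-a * l - b * r - lam * t)‖
      ≤ ENNReal.ofReal (A * min ((l+r) ^ (-(5:ℝ)/2)) ((l+r) ^ (-(1:ℝ)/2))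
          + A * ((l+r) ^ (-(3:ℝ)/2) * Real.exp (-(δ * (l+r))))) := by
  have h3 : (0:ℝ) < Real.sqrt 3 := Real.sqrt_pos.mpr (by norm_num)
  have hcpos : 0 < c := by rw [hc]; positivity
  have hmpos : 0 < m := by rw [hm]; positivity
  have hθ0 : 0 ≤ θ := hθ ▸ le_max_right _ _
  have hδpos : 0 < δ := by rw [hδ]; linarith
  have hεpos : 0 < ε := by rw [hε]; positivity
  have hε1 : ε ≤ 1 := by rw [hε, div_le_one hmpos, hδ]; linarith
  have hεm : ε * m = δ := by rw [hε]; field_simp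
  have hK1 : (1:ℝ) ≤ K := hK ▸ le_max_right _ _
  have hKa : |a| ≤ K := hK ▸ le_trans (le_max_left _ _) (le_max_left _ _)
  have hKb : |b| ≤ K := hK ▸ le_trans (le_max_right _ _) (le_max_left _ _)
  have hθa : -a ≤ θ := hθ ▸ le_trans (le_max_left _ _) (le_max_left _ _)
  have hθb : -b ≤ θ := hθ ▸ le_trans (le_max_right _ _) (le_max_left _ _)
  set s : ℝ := l + r with hsdef
  have hs : 0 < s := by positivity
  have hβ₁ : 0 < c * s^2 := by positivity
  have hβ₂ : 0 < ε * (c * s^2) := by positivity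
  -- rpow algebra
  have hcs3 : (c * s^2) ^ (-(3:ℝ)/2) = c ^ (-(3:ℝ)/2) * s ^ (-(3:ℝ)) := by
    rw [Real.mul_rpow hcpos.le (sq_nonneg s), ← Real.rpow_natCast s 2,
      ← Real.rpow_mul hs.le]
    norm_num
  have hcs1 : (c * s^2) ^ (-(1:ℝ)/2) = c ^ (-(1:ℝ)/2) * s ^ (-(1:ℝ)) := by
    rw [Real.mul_rpow hcpos.le (sq_nonneg s), ← Real.rpow_natCast s 2,
      ← Real.rpow_mul hs.le]
    norm_num
  have hcs3' : (ε * (c * s^2)) ^ (-(3:ℝ)/2) = (ε * c) ^ (-(3:ℝ)/2) * s ^ (-(3:ℝ)) := by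
    rw [show ε * (c * s^2) = (ε * c) * s^2 by ring,
      Real.mul_rpow (by positivity) (sq_nonneg s), ← Real.rpow_natCast s 2,
      ← Real.rpow_mul hs.le]
    norm_num
  have hcol1 : s ^ ((1:ℝ)/2) * s ^ (-(3:ℝ)) = s ^ (-(5:ℝ)/2) := by
    rw [← Real.rpow_add hs]; norm_num
  have hcol2 : s ^ ((1:ℝ)/2) * s ^ (-(1:ℝ)) = s ^ (-(1:ℝ)/2) := by
    rw [← Real.rpow_add hs]; norm_num
  have hcol3 : s ^ ((3:ℝ)/2) * s ^ (-(3:ℝ)) = s ^ (-(3:ℝ)/2) := by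
    rw [← Real.rpow_add hs]; norm_num
  have hs32 : s ^ ((3:ℝ)/2) = s ^ ((1:ℝ)/2) * s := by
    rw [show (3:ℝ)/2 = 1/2 + 1 by norm_num, Real.rpow_add hs, Real.rpow_one]
  -- the two bounding functions
  set h₁ : ℝ → ℝ := fun t =>
    (C₀ * s ^ ((1:ℝ)/2)) * (min 1 (lam*t) * (t ^ (-(5:ℝ)/2) * Real.exp (-((c*s^2)/t))))
    with hh₁
  set h₂ : ℝ → ℝ := fun t =>
    (C₀ * K * s ^ ((3:ℝ)/2) * Real.exp (-(δ*s))) *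
      (t ^ (-(5:ℝ)/2) * Real.exp (-((ε*(c*s^2))/t))) with hh₂
  have hh₁nn : ∀ t ∈ Ioi (0:ℝ), 0 ≤ h₁ t := by
    intro t ht
    have ht0 : 0 < t := ht
    have hmn : (0:ℝ) ≤ min 1 (lam*t) := le_min (by norm_num) (by positivity)
    rw [hh₁]
    dsimp only
    apply mul_nonneg (by positivity)
    apply mul_nonneg hmn (by positivity)
  have hh₂nn : ∀ t ∈ Ioi (0:ℝ), 0 ≤ h₂ t := by
    intro t ht
    have ht0 : 0 < t := ht
    have hKpos : (0:ℝ) < K := lt_of_lt_of_le one_pos hK1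
    rw [hh₂]
    dsimp only
    positivity
  -- pointwise bound
  have hpoint : ∀ t ∈ Ioi (0:ℝ),
      ENNReal.ofReal (C₀ * s ^ ((1:ℝ)/2) *
          Real.exp (-s^2 / (2 * Real.sqrt 3 * t)) * t ^ (-(5:ℝ)/2)) *
        ENNReal.ofReal ‖1 - Real.exp (-a * l - b * r - lam * t)‖
      ≤ ENNReal.ofReal (h₁ t) + ENNReal.ofReal (h₂ t) := by
    intro t ht
    have ht0 : 0 < t := ht
    have hexp_eq : Real.exp (-s^2 / (2 * Real.sqrt 3 * t)) = Real.exp (-((c*s^2)/t)) := by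
      congr 1
      rw [hc]
      field_simp
    have hdnn : 0 ≤ C₀ * s ^ ((1:ℝ)/2) * Real.exp (-s^2 / (2*Real.sqrt 3*t)) *
        t ^ (-(5:ℝ)/2) := by positivity
    rw [← ENNReal.ofReal_mul hdnn, ← ENNReal.ofReal_add (hh₁nn t ht) (hh₂nn t ht)]
    apply ENNReal.ofReal_le_ofReal
    rw [Real.norm_eq_abs, hexp_eq]
    -- abs bound on the integrand
    set y : ℝ := a*l + b*r with hy
    have hexp2 : Real.exp (-(lam*t)) * Real.exp (-y) = Real.exp (-a*l - b*r - lam*t) := by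
      rw [← Real.exp_add]
      congr 1
      rw [hy]
      ring
    have hsplit : 1 - Real.exp (-a*l - b*r - lam*t)
        = (1 - Real.exp (-(lam*t))) + Real.exp (-(lam*t)) * (1 - Real.exp (-y)) := by
      rw [← hexp2]
      ring
    have habs1 : |1 - Real.exp (-(lam*t))| ≤ min 1 (lam*t) := by
      have := hlp_abs_one_sub_exp (lam*t)
      have hmax : max (-(lam*t)) 0 = 0 := max_eq_right (neg_nonpos.mpr (by positivity))
      have habs : |lam*t| = lam*t := abs_of_pos (by positivity)
      rw [hmax, Real.exp_zero, mul_one, habs] at this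
      exact this
    have habs2 : |1 - Real.exp (-y)| ≤ min 1 (K*s) * Real.exp (θ*s) := by
      refine le_trans (hlp_abs_one_sub_exp y) ?_
      have h1 : |y| ≤ K * s := by
        calc |y| ≤ |a*l| + |b*r| := abs_add_le _ _
          _ = |a| * l + |b| * r := by rw [abs_mul, abs_mul, abs_of_pos hl, abs_of_pos hr]
          _ ≤ K*l + K*r := add_le_add (mul_le_mul_of_nonneg_right hKa hl.le)
              (mul_le_mul_of_nonneg_right hKb hr.le)
          _ = K * s := by rw [hsdef]; ring
      have h2 : max (-y) 0 ≤ θ*s := by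
        apply max_le
        · calc -y = (-a)*l + (-b)*r := by rw [hy]; ring
            _ ≤ θ*l + θ*r := add_le_add (mul_le_mul_of_nonneg_right hθa hl.le)
              (mul_le_mul_of_nonneg_right hθb hr.le)
            _ = θ*s := by rw [hsdef]; ring
        · positivity
      have e1 : min 1 |y| ≤ min 1 (K*s) := min_le_min le_rfl h1
      have e2 : Real.exp (max (-y) 0) ≤ Real.exp (θ*s) := Real.exp_le_exp.mpr h2
      have : (0:ℝ) ≤ min 1 |y| := le_min zero_le_one (abs_nonneg _)
      exact mul_le_mul e1 e2 (Real.exp_pos _).le (le_min zero_le_one (by positivity))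
    have habs : |1 - Real.exp (-a*l - b*r - lam*t)|
        ≤ min 1 (lam*t) + Real.exp (-(lam*t)) * (min 1 (K*s) * Real.exp (θ*s)) := by
      rw [hsplit]
      refine le_trans (abs_add_le _ _) (add_le_add habs1 ?_)
      rw [abs_mul, Real.abs_exp]
      exact mul_le_mul_of_nonneg_left habs2 (Real.exp_pos _).le
    -- the exponential trade-off
    have hAM : m * s ≤ lam*t + (c*s^2)/t := by
      have hveq : Real.sqrt ((lam*t) * ((c*s^2)/t)) = Real.sqrt (c*lam) * s := by
        rw [show (lam*t) * ((c*s^2)/t) = (c*lam) * s^2 by field_simp,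
          Real.sqrt_mul (by positivity) (s^2), Real.sqrt_sq hs.le]
      have := hlp_amgm (show (0:ℝ) ≤ lam*t by positivity)
        (show (0:ℝ) ≤ (c*s^2)/t by positivity)
      rw [hveq] at this
      rw [hm]
      linarith
    have hP2 : Real.exp (-(lam*t)) * Real.exp (-((c*s^2)/t))
        ≤ Real.exp (-((1-ε)*(m*s))) * Real.exp (-((ε*(c*s^2))/t)) := by
      rw [← Real.exp_add, ← Real.exp_add]
      apply Real.exp_le_exp.mpr
      have key1 : (1-ε)*(m*s) ≤ (1-ε)*(lam*t + (c*s^2)/t) :=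
        mul_le_mul_of_nonneg_left hAM (by linarith)
      have key2 : (0:ℝ) ≤ ε*(lam*t) := by positivity
      have expand : (1-ε)*(lam*t + (c*s^2)/t)
          = lam*t + (c*s^2)/t - ε*(lam*t) - ε*((c*s^2)/t) := by ring
      have hsplit2 : (ε*(c*s^2))/t = ε*((c*s^2)/t) := by ring
      linarith [key1, key2, expand, hsplit2]
    have hcollapse : Real.exp (θ*s) * Real.exp (-((1-ε)*(m*s))) = Real.exp (-(δ*s)) := by
      rw [← Real.exp_add]
      congr 1
      rw [hδ] at hεm ⊢
      linear_combination s * hεm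
    -- put it together
    have hQ : Real.exp (θ*s) * (Real.exp (-(lam*t)) * Real.exp (-((c*s^2)/t)))
        ≤ Real.exp (-(δ*s)) * Real.exp (-((ε*(c*s^2))/t)) := by
      calc Real.exp (θ*s) * (Real.exp (-(lam*t)) * Real.exp (-((c*s^2)/t)))
          ≤ Real.exp (θ*s) * (Real.exp (-((1-ε)*(m*s))) * Real.exp (-((ε*(c*s^2))/t))) :=
            mul_le_mul_of_nonneg_left hP2 (Real.exp_pos _).le
        _ = (Real.exp (θ*s) * Real.exp (-((1-ε)*(m*s)))) * Real.exp (-((ε*(c*s^2))/t)) := by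
            ring
        _ = Real.exp (-(δ*s)) * Real.exp (-((ε*(c*s^2))/t)) := by rw [hcollapse]
    have hdens_eq : C₀ * s ^ ((1:ℝ)/2) * Real.exp (-((c*s^2)/t)) * t ^ (-(5:ℝ)/2)
        * (min 1 (lam*t)) = h₁ t := by rw [hh₁]; ring
    have hKpos : (0:ℝ) < K := lt_of_lt_of_le one_pos hK1
    have hterm2 : C₀ * s ^ ((1:ℝ)/2) * Real.exp (-((c*s^2)/t)) * t ^ (-(5:ℝ)/2)
        * (Real.exp (-(lam*t)) * (min 1 (K*s) * Real.exp (θ*s))) ≤ h₂ t := by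
      have hmin2 : min 1 (K*s) ≤ K*s := min_le_right _ _
      have hmin2nn : (0:ℝ) ≤ min 1 (K*s) := le_min zero_le_one (by positivity)
      calc C₀ * s ^ ((1:ℝ)/2) * Real.exp (-((c*s^2)/t)) * t ^ (-(5:ℝ)/2)
            * (Real.exp (-(lam*t)) * (min 1 (K*s) * Real.exp (θ*s)))
          = (C₀ * s ^ ((1:ℝ)/2) * t ^ (-(5:ℝ)/2) * min 1 (K*s)) *
              (Real.exp (θ*s) * (Real.exp (-(lam*t)) * Real.exp (-((c*s^2)/t)))) := by ring
        _ ≤ (C₀ * s ^ ((1:ℝ)/2) * t ^ (-(5:ℝ)/2) * (K*s)) *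
              (Real.exp (-(δ*s)) * Real.exp (-((ε*(c*s^2))/t))) := by
            apply mul_le_mul
            · exact mul_le_mul_of_nonneg_left hmin2 (by positivity)
            · exact hQ
            · positivity
            · positivity
        _ = h₂ t := by
            rw [hh₂]
            dsimp only
            rw [hs32]
            ring
    set X : ℝ := |1 - Real.exp (-a*l - b*r - lam*t)| with hX
    calc C₀ * s ^ ((1:ℝ)/2) * Real.exp (-((c*s^2)/t)) * t ^ (-(5:ℝ)/2) * X
        ≤ C₀ * s ^ ((1:ℝ)/2) * Real.exp (-((c*s^2)/t)) * t ^ (-(5:ℝ)/2)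
          * (min 1 (lam*t) + Real.exp (-(lam*t)) * (min 1 (K*s) * Real.exp (θ*s))) := by
          apply mul_le_mul_of_nonneg_left habs (by positivity)
      _ = C₀ * s ^ ((1:ℝ)/2) * Real.exp (-((c*s^2)/t)) * t ^ (-(5:ℝ)/2) * (min 1 (lam*t))
          + C₀ * s ^ ((1:ℝ)/2) * Real.exp (-((c*s^2)/t)) * t ^ (-(5:ℝ)/2)
            * (Real.exp (-(lam*t)) * (min 1 (K*s) * Real.exp (θ*s))) := by ring
      _ ≤ h₁ t + h₂ t := by
          rw [hdens_eq]
          exact add_le_add_right hterm2 _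
  have hA0 : 0 ≤ A := le_trans (by positivity) hA₃
  have hC₁nn : (0:ℝ) ≤ C₀ * s ^ ((1:ℝ)/2) := by positivity
  have hKpos : (0:ℝ) < K := lt_of_lt_of_le one_pos hK1
  have hC₂nn : (0:ℝ) ≤ C₀ * K * s ^ ((3:ℝ)/2) * Real.exp (-(δ*s)) := by positivity
  have I1 : ∫⁻ t in Ioi (0:ℝ), ENNReal.ofReal (h₁ t)
      ≤ ENNReal.ofReal (A * min (s ^ (-(5:ℝ)/2)) (s ^ (-(1:ℝ)/2))) := by
    have hrw : ∫⁻ t in Ioi (0:ℝ), ENNReal.ofReal (h₁ t)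
        = ENNReal.ofReal (C₀ * s ^ ((1:ℝ)/2)) *
          ∫⁻ t in Ioi (0:ℝ),
            ENNReal.ofReal (min 1 (lam*t) * (t ^ (-(5:ℝ)/2) * Real.exp (-((c*s^2)/t)))) := by
      simp only [hh₁]
      simp_rw [ENNReal.ofReal_mul hC₁nn]
      rw [lintegral_const_mul _ (by fun_prop)]
    rw [hrw]
    rcases min_cases (s ^ (-(5:ℝ)/2)) (s ^ (-(1:ℝ)/2)) with ⟨hEq,_⟩|⟨hEq,_⟩ <;> rw [hEq]
    · have hb : ∀ t ∈ Ioi (0:ℝ),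
          ENNReal.ofReal (min 1 (lam*t) * (t ^ (-(5:ℝ)/2) * Real.exp (-((c*s^2)/t))))
          ≤ ENNReal.ofReal (t ^ (-(5:ℝ)/2) * Real.exp (-((c*s^2)/t))) := by
        intro t ht
        have ht0 : 0 < t := ht
        exact ENNReal.ofReal_le_ofReal
          (mul_le_of_le_one_left (by positivity) (min_le_left _ _))
      calc _ ≤ ENNReal.ofReal (C₀ * s ^ ((1:ℝ)/2)) *
            ENNReal.ofReal (9 * (c*s^2) ^ (-(3:ℝ)/2)) :=
            mul_le_mul_right (le_trans (setLIntegral_mono (by fun_prop) hb) (hlp_TA hβ₁)) _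
        _ ≤ _ := by
            rw [← ENNReal.ofReal_mul hC₁nn]
            apply ENNReal.ofReal_le_ofReal
            rw [hcs3]
            calc C₀ * s ^ ((1:ℝ)/2) * (9 * (c ^ (-(3:ℝ)/2) * s ^ (-(3:ℝ))))
                = (9 * C₀ * c ^ (-(3:ℝ)/2)) * (s ^ ((1:ℝ)/2) * s ^ (-(3:ℝ))) := by ring
              _ = (9 * C₀ * c ^ (-(3:ℝ)/2)) * s ^ (-(5:ℝ)/2) := by rw [hcol1]
              _ ≤ A * s ^ (-(5:ℝ)/2) :=
                  mul_le_mul_of_nonneg_right hA₁ (Real.rpow_nonneg hs.le _)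
    · have hb : ∀ t ∈ Ioi (0:ℝ),
          ENNReal.ofReal (min 1 (lam*t) * (t ^ (-(5:ℝ)/2) * Real.exp (-((c*s^2)/t))))
          ≤ ENNReal.ofReal (lam * (t ^ (-(3:ℝ)/2) * Real.exp (-((c*s^2)/t)))) := by
        intro t ht
        have ht0 : 0 < t := ht
        apply ENNReal.ofReal_le_ofReal
        have h32 : t ^ (-(3:ℝ)/2) = t * t ^ (-(5:ℝ)/2) := by
          rw [show -(3:ℝ)/2 = 1 + -(5:ℝ)/2 by norm_num, Real.rpow_add ht0, Real.rpow_one]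
        calc min 1 (lam*t) * (t ^ (-(5:ℝ)/2) * Real.exp (-((c*s^2)/t)))
            ≤ (lam*t) * (t ^ (-(5:ℝ)/2) * Real.exp (-((c*s^2)/t))) :=
              mul_le_mul_of_nonneg_right (min_le_right _ _) (by positivity)
          _ = lam * (t ^ (-(3:ℝ)/2) * Real.exp (-((c*s^2)/t))) := by rw [h32]; ring
      have hc2 : ∫⁻ t in Ioi (0:ℝ),
          ENNReal.ofReal (lam * (t ^ (-(3:ℝ)/2) * Real.exp (-((c*s^2)/t))))
          ≤ ENNReal.ofReal (lam * (4 * (c*s^2) ^ (-(1:ℝ)/2))) := by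
        simp_rw [ENNReal.ofReal_mul hlam.le]
        rw [lintegral_const_mul _ (by fun_prop)]
        exact mul_le_mul_right (hlp_TB hβ₁) _
      calc _ ≤ ENNReal.ofReal (C₀ * s ^ ((1:ℝ)/2)) *
            ENNReal.ofReal (lam * (4 * (c*s^2) ^ (-(1:ℝ)/2))) :=
            mul_le_mul_right (le_trans (setLIntegral_mono (by fun_prop) hb) hc2) _
        _ ≤ _ := by
            rw [← ENNReal.ofReal_mul hC₁nn]
            apply ENNReal.ofReal_le_ofReal
            rw [hcs1]
            calc C₀ * s ^ ((1:ℝ)/2) * (lam * (4 * (c ^ (-(1:ℝ)/2) * s ^ (-(1:ℝ)))))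
                = (4 * lam * C₀ * c ^ (-(1:ℝ)/2)) * (s ^ ((1:ℝ)/2) * s ^ (-(1:ℝ))) := by ring
              _ = (4 * lam * C₀ * c ^ (-(1:ℝ)/2)) * s ^ (-(1:ℝ)/2) := by rw [hcol2]
              _ ≤ A * s ^ (-(1:ℝ)/2) :=
                  mul_le_mul_of_nonneg_right hA₂ (Real.rpow_nonneg hs.le _)
  have I2 : ∫⁻ t in Ioi (0:ℝ), ENNReal.ofReal (h₂ t)
      ≤ ENNReal.ofReal (A * (s ^ (-(3:ℝ)/2) * Real.exp (-(δ*s)))) := by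
    have hrw : ∫⁻ t in Ioi (0:ℝ), ENNReal.ofReal (h₂ t)
        = ENNReal.ofReal (C₀ * K * s ^ ((3:ℝ)/2) * Real.exp (-(δ*s))) *
          ∫⁻ t in Ioi (0:ℝ),
            ENNReal.ofReal (t ^ (-(5:ℝ)/2) * Real.exp (-((ε*(c*s^2))/t))) := by
      simp only [hh₂]
      simp_rw [ENNReal.ofReal_mul hC₂nn]
      rw [lintegral_const_mul _ (by fun_prop)]
    rw [hrw]
    calc _ ≤ ENNReal.ofReal (C₀ * K * s ^ ((3:ℝ)/2) * Real.exp (-(δ*s))) *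
          ENNReal.ofReal (9 * (ε*(c*s^2)) ^ (-(3:ℝ)/2)) := mul_le_mul_right (hlp_TA hβ₂) _
      _ ≤ _ := by
          rw [← ENNReal.ofReal_mul hC₂nn]
          apply ENNReal.ofReal_le_ofReal
          rw [hcs3']
          calc C₀ * K * s ^ ((3:ℝ)/2) * Real.exp (-(δ*s)) *
                (9 * ((ε*c) ^ (-(3:ℝ)/2) * s ^ (-(3:ℝ))))
              = (9 * C₀ * K * (ε*c) ^ (-(3:ℝ)/2)) *
                (s ^ ((3:ℝ)/2) * s ^ (-(3:ℝ))) * Real.exp (-(δ*s)) := by ring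
            _ = (9 * C₀ * K * (ε*c) ^ (-(3:ℝ)/2)) * (s ^ (-(3:ℝ)/2) * Real.exp (-(δ*s))) := by
                rw [hcol3]; ring
            _ ≤ A * (s ^ (-(3:ℝ)/2) * Real.exp (-(δ*s))) :=
                mul_le_mul_of_nonneg_right hA₃ (by positivity)
  calc ∫⁻ t in Ioi (0:ℝ),
      ENNReal.ofReal (C₀ * s ^ ((1:ℝ)/2) *
          Real.exp (-s^2 / (2 * Real.sqrt 3 * t)) * t ^ (-(5:ℝ)/2)) *
        ENNReal.ofReal ‖1 - Real.exp (-a * l - b * r - lam * t)‖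
      ≤ ∫⁻ t in Ioi (0:ℝ), (ENNReal.ofReal (h₁ t) + ENNReal.ofReal (h₂ t)) :=
        setLIntegral_mono (by simp only [hh₁, hh₂]; fun_prop) hpoint
    _ = (∫⁻ t in Ioi (0:ℝ), ENNReal.ofReal (h₁ t)) +
        ∫⁻ t in Ioi (0:ℝ), ENNReal.ofReal (h₂ t) :=
        lintegral_add_left (by simp only [hh₁]; fun_prop) _
    _ ≤ ENNReal.ofReal (A * min (s ^ (-(5:ℝ)/2)) (s ^ (-(1:ℝ)/2)))
        + ENNReal.ofReal (A * (s ^ (-(3:ℝ)/2) * Real.exp (-(δ*s)))) := add_le_add I1 I2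
    _ = _ := by
        rw [← ENNReal.ofReal_add]
        · apply mul_nonneg hA0 (le_min (Real.rpow_nonneg hs.le _) (Real.rpow_nonneg hs.le _))
        · positivity
set_option maxHeartbeats 1000000 in
/-- Integrability of `(l,r,t) ↦ 1 − e^{−al−br−λt}` with respect to `μ` whenever
`a, b > −2√(cλ)`, needed for the Lévy–Khintchine uniqueness argument. -/
theorem stmt_18 (lam : ℝ) (hlam : 0 < lam) (c : ℝ) (hc : c = (2 * Real.sqrt 3)⁻¹)
    (a b : ℝ) (ha : -(2 * Real.sqrt (c * lam)) < a) (hb : -(2 * Real.sqrt (c * lam)) < b) :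
    MeasureTheory.Integrable
      (fun p : ℝ × ℝ × ℝ => 1 - Real.exp (-a * p.1 - b * p.2.1 - lam * p.2.2)) μ := by
  have h3 : (0:ℝ) < Real.sqrt 3 := Real.sqrt_pos.mpr (by norm_num)
  have hcpos : 0 < c := by rw [hc]; positivity
  have hpi : (0:ℝ) < Real.pi := Real.pi_pos
  set C₀ : ℝ := (3:ℝ) ^ (-(5:ℝ)/8) / (8 * Real.sqrt (2 * Real.pi)) with hC₀def
  have hC₀ : 0 < C₀ := by rw [hC₀def]; positivity
  set m : ℝ := 2 * Real.sqrt (c * lam) with hmdef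
  have hmpos : 0 < m := by rw [hmdef]; positivity
  set θ : ℝ := max (max (-a) (-b)) 0 with hθdef
  have hθm : θ < m := by
    rw [hθdef]
    exact max_lt (max_lt (by linarith) (by linarith)) hmpos
  set δ : ℝ := (m - θ)/2 with hδdef
  have hδpos : 0 < δ := by rw [hδdef]; linarith
  set ε : ℝ := δ/m with hεdef
  have hεpos : 0 < ε := by rw [hεdef]; positivity
  set K : ℝ := max (max |a| |b|) 1 with hKdef
  have hK1 : (1:ℝ) ≤ K := hKdef ▸ le_max_right _ _
  have hKpos : (0:ℝ) < K := lt_of_lt_of_le one_pos hK1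
  set A : ℝ := max (max (9*C₀*c^(-(3:ℝ)/2)) (4*lam*C₀*c^(-(1:ℝ)/2)))
    (9*C₀*K*(ε*c)^(-(3:ℝ)/2)) with hAdef
  have hA₁ : 9*C₀*c^(-(3:ℝ)/2) ≤ A := hAdef ▸ le_trans (le_max_left _ _) (le_max_left _ _)
  have hA₂ : 4*lam*C₀*c^(-(1:ℝ)/2) ≤ A := hAdef ▸ le_trans (le_max_right _ _) (le_max_left _ _)
  have hA₃ : 9*C₀*K*(ε*c)^(-(3:ℝ)/2) ≤ A := hAdef ▸ le_max_right _ _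
  have hA0 : 0 ≤ A := le_trans (by positivity) hA₃
  constructor
  · exact Continuous.aestronglyMeasurable (by fun_prop)
  · rw [hasFiniteIntegral_iff_norm]
    have hμeq : μ = (volume.restrict
        {p : ℝ × ℝ × ℝ | 0 < p.1 ∧ 0 < p.2.1 ∧ 0 < p.2.2}).withDensity
        (fun p => ENNReal.ofReal (C₀ * (p.1 + p.2.1) ^ ((1:ℝ)/2) *
          Real.exp (-(p.1 + p.2.1)^2 / (2 * Real.sqrt 3 * p.2.2)) * p.2.2 ^ (-(5:ℝ)/2))) := by
      rw [hC₀def]; rfl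
    rw [hμeq, lintegral_withDensity_eq_lintegral_mul _ (by fun_prop) (by fun_prop)]
    simp only [Pi.mul_apply]
    rw [show {p : ℝ × ℝ × ℝ | 0 < p.1 ∧ 0 < p.2.1 ∧ 0 < p.2.2}
        = (Ioi (0:ℝ)) ×ˢ ((Ioi (0:ℝ)) ×ˢ (Ioi (0:ℝ))) from by
      ext ⟨l, r, t⟩; simp [Set.mem_prod]]
    rw [show (volume : Measure (ℝ × ℝ × ℝ)).restrict
          ((Ioi (0:ℝ)) ×ˢ ((Ioi (0:ℝ)) ×ˢ (Ioi (0:ℝ))))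
        = (volume.restrict (Ioi (0:ℝ))).prod
            ((volume.restrict (Ioi (0:ℝ))).prod (volume.restrict (Ioi (0:ℝ)))) from by
      rw [Measure.volume_eq_prod, ← Measure.prod_restrict, Measure.volume_eq_prod, ← Measure.prod_restrict]]
    rw [lintegral_prod _ (show Measurable _ by fun_prop).aemeasurable]
    have hΨmeas : Measurable (fun l : ℝ => ENNReal.ofReal
        (A*((8:ℝ)/3 * min 1 (l ^ (-(3:ℝ)/2))) +
          A*(2*(l ^ (-(1:ℝ)/2) * Real.exp (-(δ*l)))))) := by fun_prop
    refine lt_of_le_of_lt (setLIntegral_mono hΨmeas ?_) ?_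
    · -- inner double integral bounded by Ψ l
      intro l hl
      have hl0 : (0:ℝ) < l := hl
      rw [lintegral_prod _ (show Measurable _ by fun_prop).aemeasurable]
      have hkey : ∀ r ∈ Ioi (0:ℝ),
          (∫⁻ t in Ioi (0:ℝ),
            ENNReal.ofReal (C₀ * (l + r) ^ ((1:ℝ)/2) *
                Real.exp (-(l + r)^2 / (2 * Real.sqrt 3 * t)) * t ^ (-(5:ℝ)/2)) *
              ENNReal.ofReal ‖1 - Real.exp (-a * l - b * r - lam * t)‖)
          ≤ ENNReal.ofReal (A * min ((l+r) ^ (-(5:ℝ)/2)) ((l+r) ^ (-(1:ℝ)/2))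
              + A * ((l+r) ^ (-(3:ℝ)/2) * Real.exp (-(δ * (l+r))))) := fun r hr =>
        hlp_keyt hlam hc hC₀.le hmdef hθdef hδdef hεdef hθm hKdef hA₁ hA₂ hA₃ hl0 hr
      calc ∫⁻ r in Ioi (0:ℝ), ∫⁻ t in Ioi (0:ℝ),
            ENNReal.ofReal (C₀ * (l + r) ^ ((1:ℝ)/2) *
                Real.exp (-(l + r)^2 / (2 * Real.sqrt 3 * t)) * t ^ (-(5:ℝ)/2)) *
              ENNReal.ofReal ‖1 - Real.exp (-a * l - b * r - lam * t)‖
          ≤ ∫⁻ r in Ioi (0:ℝ),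
              ENNReal.ofReal (A * min ((l+r) ^ (-(5:ℝ)/2)) ((l+r) ^ (-(1:ℝ)/2))
                + A * ((l+r) ^ (-(3:ℝ)/2) * Real.exp (-(δ * (l+r))))) :=
            setLIntegral_mono (by fun_prop) hkey
        _ = ∫⁻ s in Ioi l,
              ENNReal.ofReal (A * min (s ^ (-(5:ℝ)/2)) (s ^ (-(1:ℝ)/2))
                + A * (s ^ (-(3:ℝ)/2) * Real.exp (-(δ * s)))) :=
            hlp_shift l (fun s => ENNReal.ofReal (A * min (s ^ (-(5:ℝ)/2)) (s ^ (-(1:ℝ)/2))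
                + A * (s ^ (-(3:ℝ)/2) * Real.exp (-(δ * s)))))
        _ ≤ (∫⁻ s in Ioi l, ENNReal.ofReal (A * min (s ^ (-(5:ℝ)/2)) (s ^ (-(1:ℝ)/2))))
            + ∫⁻ s in Ioi l, ENNReal.ofReal (A * (s ^ (-(3:ℝ)/2) * Real.exp (-(δ * s)))) := by
            rw [← lintegral_add_left (show Measurable (fun s : ℝ =>
              ENNReal.ofReal (A * min (s ^ (-(5:ℝ)/2)) (s ^ (-(1:ℝ)/2)))) by fun_prop)]
            exact setLIntegral_mono (by fun_prop) (fun s _ => ENNReal.ofReal_add_le)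
        _ ≤ ENNReal.ofReal (A*((8:ℝ)/3 * min 1 (l ^ (-(3:ℝ)/2))) +
              A*(2*(l ^ (-(1:ℝ)/2) * Real.exp (-(δ*l))))) := by
            have hx1 : 0 ≤ A * ((8:ℝ)/3 * min 1 (l ^ (-(3:ℝ)/2))) :=
              mul_nonneg hA0 (mul_nonneg (by norm_num)
                (le_min zero_le_one (Real.rpow_nonneg hl0.le _)))
            have hx2 : 0 ≤ A*(2*(l ^ (-(1:ℝ)/2) * Real.exp (-(δ*l)))) := by positivity
            rw [ENNReal.ofReal_add hx1 hx2]
            apply add_le_add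
            · simp_rw [ENNReal.ofReal_mul hA0]
              rw [lintegral_const_mul _ (by fun_prop)]
              exact mul_le_mul_right (hlp_R1 hl0) _
            · simp_rw [ENNReal.ofReal_mul hA0]
              rw [lintegral_const_mul _ (by fun_prop)]
              exact mul_le_mul_right (hlp_R2 hl0 hδpos) _
    · -- outer integral finite
      calc ∫⁻ l in Ioi (0:ℝ), ENNReal.ofReal
            (A*((8:ℝ)/3 * min 1 (l ^ (-(3:ℝ)/2))) +
              A*(2*(l ^ (-(1:ℝ)/2) * Real.exp (-(δ*l)))))
          ≤ ∫⁻ l in Ioi (0:ℝ),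
              (ENNReal.ofReal (A*(8:ℝ)/3) * ENNReal.ofReal (min 1 (l ^ (-(3:ℝ)/2)))
                + ENNReal.ofReal (2*A) *
                    ENNReal.ofReal (l ^ (-(1:ℝ)/2) * Real.exp (-(δ*l)))) := by
            refine setLIntegral_mono (by fun_prop) (fun l hl => ?_)
            refine le_trans ENNReal.ofReal_add_le (add_le_add ?_ ?_)
            · rw [← ENNReal.ofReal_mul (by positivity)]
              exact ENNReal.ofReal_le_ofReal (le_of_eq (by ring))
            · rw [← ENNReal.ofReal_mul (by positivity)]
              exact ENNReal.ofReal_le_ofReal (le_of_eq (by ring))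
        _ = ENNReal.ofReal (A*(8:ℝ)/3) *
              (∫⁻ l in Ioi (0:ℝ), ENNReal.ofReal (min 1 (l ^ (-(3:ℝ)/2))))
            + ENNReal.ofReal (2*A) *
              ∫⁻ l in Ioi (0:ℝ), ENNReal.ofReal (l ^ (-(1:ℝ)/2) * Real.exp (-(δ*l))) := by
            rw [lintegral_add_left (show Measurable (fun l : ℝ =>
                ENNReal.ofReal (A*(8:ℝ)/3) * ENNReal.ofReal (min 1 (l ^ (-(3:ℝ)/2))))
                by fun_prop),
              lintegral_const_mul _ (show Measurable (fun l : ℝ =>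
                ENNReal.ofReal (min 1 (l ^ (-(3:ℝ)/2)))) by fun_prop),
              lintegral_const_mul _ (show Measurable (fun l : ℝ =>
                ENNReal.ofReal (l ^ (-(1:ℝ)/2) * Real.exp (-(δ*l)))) by fun_prop)]
        _ < ⊤ := by
            apply ENNReal.add_lt_top.mpr
            constructor
            · exact ENNReal.mul_lt_top ENNReal.ofReal_lt_top hlp_fin1
            · exact ENNReal.mul_lt_top ENNReal.ofReal_lt_top (hlp_fin2 hδpos)
end
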